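/- arXiv:2407.07001 — 4 statements merged into one kernel-verified Lean document; each statement's English description precedes it below -/
import Mathlib

section
/- Let d ≥ 1 be an integer, let a > 0, b > 0, let k ≥ 0 and m ≥ 0 be real numbers with k + m > d, and let x ∈ ℝ^d with x ≠ 0. Set R = max{|x|, a, b} and I = ∫_{ℝ^d} dz / ((|z|+a)^k (|z−x|+b)^m). Then there is a constant C depending only on d, k, m such that I ≤ C [ R^{d−k−m} + δ_{k=d} R^{−m} log(R/a) + δ_{m=d} R^{−k} log(R/b) + 𝟙_{k>d} R^{−m} a^{d−k} + 𝟙_{m>d} R^{−k} b^{d−m} ]. -/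
open Real MeasureTheory

open Set


lemma ptwise_bound (k m a b R u v : ℝ) (hk : 0 ≤ k) (hm : 0 ≤ m)
    (ha : 0 < a) (hb : 0 < b) (hu : 0 ≤ u) (hv : 0 ≤ v)
    (haR : a ≤ R) (hbR : b ≤ R)
    (huv : u ≤ v + R) (hvu : v ≤ u + R) (hsum : R ≤ u + v + a + b) :
    1 / ((u + a) ^ k * (v + b) ^ m) ≤
      4 ^ m * (1 / ((u + a) ^ k * (u + R) ^ m)) +
      4 ^ k * (1 / ((v + R) ^ k * (v + b) ^ m)) := by
  have hR0 : 0 < R := lt_of_lt_of_le ha haR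
  have hua : 0 < u + a := by linarith
  have hvb : 0 < v + b := by linarith
  have huR : 0 < u + R := by linarith
  have hvR : 0 < v + R := by linarith
  have h4m : (0:ℝ) < 4 ^ m := rpow_pos_of_pos (by norm_num) m
  have h4k : (0:ℝ) < 4 ^ k := rpow_pos_of_pos (by norm_num) k
  rcases le_total (u + a) (v + b) with hcase | hcase
  · -- v + b ≥ (u+R)/4
    have key : (u + R) / 4 ≤ v + b := by linarith
    have h1 : ((u + R) / 4) ^ m ≤ (v + b) ^ m :=
      rpow_le_rpow (by positivity) key hm
    rw [Real.div_rpow huR.le (by norm_num)] at h1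
    have h2 : 1 / ((u + a) ^ k * (v + b) ^ m) ≤
        1 / ((u + a) ^ k * ((u + R) ^ m / 4 ^ m)) := by
      apply one_div_le_one_div_of_le
      · positivity
      · exact mul_le_mul_of_nonneg_left h1 (by positivity)
    have h3 : 1 / ((u + a) ^ k * ((u + R) ^ m / 4 ^ m)) =
        4 ^ m * (1 / ((u + a) ^ k * (u + R) ^ m)) := by
      field_simp
    calc 1 / ((u + a) ^ k * (v + b) ^ m) ≤ _ := h2
      _ = 4 ^ m * (1 / ((u + a) ^ k * (u + R) ^ m)) := h3
      _ ≤ _ := le_add_of_nonneg_right (by positivity)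
  · have key : (v + R) / 4 ≤ u + a := by linarith
    have h1 : ((v + R) / 4) ^ k ≤ (u + a) ^ k :=
      rpow_le_rpow (by positivity) key hk
    rw [Real.div_rpow hvR.le (by norm_num)] at h1
    have h2 : 1 / ((u + a) ^ k * (v + b) ^ m) ≤
        1 / (((v + R) ^ k / 4 ^ k) * (v + b) ^ m) := by
      apply one_div_le_one_div_of_le
      · positivity
      · exact mul_le_mul_of_nonneg_right h1 (by positivity)
    have h3 : 1 / (((v + R) ^ k / 4 ^ k) * (v + b) ^ m) =
        4 ^ k * (1 / ((v + R) ^ k * (v + b) ^ m)) := by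
      field_simp
    calc 1 / ((u + a) ^ k * (v + b) ^ m) ≤ _ := h2
      _ = 4 ^ k * (1 / ((v + R) ^ k * (v + b) ^ m)) := h3
      _ ≤ _ := le_add_of_nonneg_left (by positivity)


set_option maxHeartbeats 1000000 in
lemma oneD_bound (d : ℕ) (hd : 1 ≤ d) (k m : ℝ) (hk : 0 ≤ k) (hm : 0 ≤ m)
    (hkm : (d : ℝ) < k + m) :
    ∃ C : ℝ, 0 < C ∧ ∀ a R : ℝ, 0 < a → a ≤ R →
      (∫ r in Ioi (0:ℝ), r ^ (d - 1) * (1 / ((r + a) ^ k * (r + R) ^ m)))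
        ≤ C * (R ^ ((d:ℝ) - k - m)
            + (if k = (d:ℝ) then 1 else 0) * R ^ (-m) * Real.log (R / a)
            + (if (d:ℝ) < k then 1 else 0) * R ^ (-m) * a ^ ((d:ℝ) - k)) := by
  classical
  set p : ℝ := (d:ℝ) - 1 - k with hp
  have hpm : p - m < -1 := by simp only [hp]; linarith
  have hq : (d:ℝ) - k - m < 0 := by linarith
  set C2 : ℝ := 2 ^ d / (k + m - d) with hC2
  have hC2pos : 0 < C2 := by
    apply div_pos (by positivity)
    linarith
  set C1 : ℝ := if k = (d:ℝ) then Real.log 2 + 1 else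
      (if (d:ℝ) < k then 1 / (k - d) else 2 ^ d / ((d:ℝ) - k)) with hC1
  have hC1pos : 0 < C1 := by
    rw [hC1]
    split_ifs with h1 h2
    · positivity
    · have : (0:ℝ) < k - d := by linarith
      positivity
    · have : (0:ℝ) < (d:ℝ) - k := by
        rcases lt_or_eq_of_le (not_lt.mp h2) with h | h
        · linarith
        · exact absurd h h1
      positivity
  refine ⟨C2 + C1, by positivity, fun a R ha haR => ?_⟩
  have hR0 : 0 < R := lt_of_lt_of_le ha haR
  -- the dominating radial function
  set g : ℝ → ℝ := fun r => (r + a) ^ p * (r + R) ^ (-m) with hg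
  -- integrability of g on Ioc 0 R
  have hcont : ContinuousOn g (Icc 0 R) := by
    apply ContinuousOn.mul
    · apply ContinuousOn.rpow_const (by fun_prop)
      intro r hr
      exact Or.inl (by have := hr.1; positivity)
    · apply ContinuousOn.rpow_const (by fun_prop)
      intro r hr
      exact Or.inl (by have := hr.1; positivity)
  have hgIoc : IntegrableOn g (Ioc 0 R) :=
    (hcont.integrableOn_Icc).mono_set Ioc_subset_Icc_self
  -- integrability of g on Ioi R, with pointwise bound by 2^d * r^(p-m)
  have hgle : ∀ r ∈ Ioi R, g r ≤ 2 ^ d * r ^ (p - m) := by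
    intro r hr
    have hr0 : 0 < r := lt_trans hR0 hr
    have h1 : (r + a) ^ p ≤ 2 ^ d * r ^ p := by
      rcases le_or_gt 0 p with hp0 | hp0
      · have : (r + a) ^ p ≤ (2 * r) ^ p := by
          apply rpow_le_rpow (by positivity) (by nlinarith [lt_of_le_of_lt haR hr]) hp0
        rw [Real.mul_rpow (by norm_num) hr0.le] at this
        refine le_trans this (mul_le_mul_of_nonneg_right ?_ (by positivity))
        rw [show ((2:ℝ) ^ d) = (2:ℝ) ^ (d:ℝ) by rw [rpow_natCast]]
        exact rpow_le_rpow_of_exponent_le (by norm_num) (by simp only [hp]; linarith)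
      · have h2 : (r + a) ^ p ≤ r ^ p :=
          rpow_le_rpow_of_nonpos hr0 (by linarith) hp0.le
        have : (1:ℝ) ≤ 2 ^ d := one_le_pow₀ (by norm_num)
        nlinarith [rpow_pos_of_pos hr0 p]
    have h2 : (r + R) ^ (-m) ≤ r ^ (-m) :=
      rpow_le_rpow_of_nonpos hr0 (by linarith) (by linarith)
    calc g r ≤ (2 ^ d * r ^ p) * r ^ (-m) := by
          apply mul_le_mul h1 h2 (by positivity) (by positivity)
      _ = 2 ^ d * r ^ (p - m) := by
          rw [mul_assoc, ← rpow_add hr0]; ring_nf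
  have hmeasIoi : AEStronglyMeasurable g (volume.restrict (Ioi R)) := by
    apply ContinuousOn.aestronglyMeasurable _ measurableSet_Ioi
    apply ContinuousOn.mul
    · apply ContinuousOn.rpow_const (by fun_prop)
      intro r hr
      exact Or.inl (by have h : R < r := hr; exact ne_of_gt (by linarith))
    · apply ContinuousOn.rpow_const (by fun_prop)
      intro r hr
      exact Or.inl (by have h : R < r := hr; exact ne_of_gt (by linarith))
  have hdomIoi : IntegrableOn (fun r : ℝ => 2 ^ d * r ^ (p - m)) (Ioi R) :=
    (integrableOn_Ioi_rpow_of_lt hpm hR0).const_mul _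
  have hgIoi : IntegrableOn g (Ioi R) := by
    apply Integrable.mono' hdomIoi hmeasIoi
    filter_upwards [ae_restrict_mem measurableSet_Ioi] with r hr
    rw [Real.norm_eq_abs, abs_of_nonneg (by
      have : R < r := hr
      have h1 : 0 < r + a := by linarith
      have h2 : 0 < r + R := by linarith
      positivity)]
    exact hgle r hr
  have hgInt : IntegrableOn g (Ioi 0) := by
    rw [← Ioc_union_Ioi_eq_Ioi hR0.le]
    exact hgIoc.union hgIoi
  -- Step 1: bound the integrand by g
  have step1 : (∫ r in Ioi (0:ℝ), r ^ (d - 1) * (1 / ((r + a) ^ k * (r + R) ^ m)))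
      ≤ ∫ r in Ioi (0:ℝ), g r := by
    apply integral_mono_of_nonneg
    · filter_upwards [ae_restrict_mem measurableSet_Ioi] with r hr
      have hr0 : 0 < r := hr
      positivity
    · exact hgInt
    · filter_upwards [ae_restrict_mem measurableSet_Ioi] with r hr
      have hr0 : 0 < r := hr
      have hra : 0 < r + a := by linarith
      have hrR : 0 < r + R := by linarith
      have e1 : 1 / ((r + a) ^ k * (r + R) ^ m) = (r+a) ^ (-k) * (r+R) ^ (-m) := by
        rw [rpow_neg hra.le, rpow_neg hrR.le, one_div, mul_inv]
      have h1 : (r:ℝ) ^ (d-1) ≤ (r+a) ^ ((d:ℝ)-1) := by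
        rw [show ((d:ℝ) - 1) = ((d-1 : ℕ) : ℝ) by
          rw [Nat.cast_sub hd]; norm_num, rpow_natCast]
        exact pow_le_pow_left₀ hr0.le (by linarith) _
      have e2 : (r+a) ^ ((d:ℝ)-1) * ((r+a) ^ (-k) * (r+R) ^ (-m)) = g r := by
        rw [hg, ← mul_assoc, ← rpow_add hra,
          show (d:ℝ) - 1 + -k = p by rw [hp]; ring]
      calc r ^ (d - 1) * (1 / ((r + a) ^ k * (r + R) ^ m))
          = r ^ (d-1) * ((r+a) ^ (-k) * (r+R) ^ (-m)) := by rw [e1]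
        _ ≤ (r+a) ^ ((d:ℝ)-1) * ((r+a) ^ (-k) * (r+R) ^ (-m)) :=
            mul_le_mul_of_nonneg_right h1 (by positivity)
        _ = g r := e2
  -- Step 2: split the integral of g
  have hsplit : (∫ r in Ioi (0:ℝ), g r) = (∫ r in Ioc 0 R, g r) + ∫ r in Ioi R, g r := by
    rw [← Ioc_union_Ioi_eq_Ioi hR0.le]
    exact setIntegral_union (Ioc_disjoint_Ioi le_rfl) measurableSet_Ioi hgIoc hgIoi
  -- Step 3: the far part
  have hK2 : (∫ r in Ioi R, g r) ≤ C2 * R ^ ((d:ℝ) - k - m) := by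
    have hb1 : (∫ r in Ioi R, g r) ≤ ∫ r in Ioi R, 2 ^ d * r ^ (p - m) := by
      apply integral_mono_of_nonneg
      · filter_upwards [ae_restrict_mem measurableSet_Ioi] with r hr
        have hr0 : R < r := hr
        have hra : 0 < r + a := by linarith
        have hrR : 0 < r + R := by linarith
        rw [hg]; positivity
      · exact hdomIoi
      · filter_upwards [ae_restrict_mem measurableSet_Ioi] with r hr
        exact hgle r hr
    rw [integral_const_mul, integral_Ioi_rpow_of_lt hpm hR0] at hb1
    have e3 : p - m + 1 = (d:ℝ) - k - m := by rw [hp]; ring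
    rw [e3] at hb1
    refine le_trans hb1 (le_of_eq ?_)
    rw [hC2, show ((d:ℝ) - k - m) = -(k + m - (d:ℝ)) from by ring, neg_div_neg_eq]
    ring
  -- Step 4: the near part
  have hnear : (∫ r in Ioc (0:ℝ) R, g r) ≤ R ^ (-m) * ∫ r in Ioc (0:ℝ) R, (r+a) ^ p := by
    have hdom : IntegrableOn (fun r : ℝ => R ^ (-m) * (r+a) ^ p) (Ioc 0 R) := by
      apply Integrable.const_mul
      apply (ContinuousOn.integrableOn_Icc ?_).mono_set Ioc_subset_Icc_self
      apply ContinuousOn.rpow_const (by fun_prop)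
      intro r hr
      exact Or.inl (by have := hr.1; positivity)
    have hb1 : (∫ r in Ioc (0:ℝ) R, g r) ≤ ∫ r in Ioc (0:ℝ) R, R ^ (-m) * (r+a) ^ p := by
      apply integral_mono_of_nonneg
      · filter_upwards [ae_restrict_mem measurableSet_Ioc] with r hr
        have hr0 : 0 < r := hr.1
        have hra : 0 < r + a := by linarith
        have hrR : 0 < r + R := by linarith
        rw [hg]; positivity
      · exact hdom
      · filter_upwards [ae_restrict_mem measurableSet_Ioc] with r hr
        have hr0 : 0 < r := hr.1
        have h2 : (r + R) ^ (-m) ≤ R ^ (-m) :=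
          rpow_le_rpow_of_nonpos hR0 (by linarith) (by linarith)
        rw [hg]
        calc (r+a) ^ p * (r+R) ^ (-m) ≤ (r+a) ^ p * R ^ (-m) :=
              mul_le_mul_of_nonneg_left h2 (by positivity)
          _ = R ^ (-m) * (r+a) ^ p := by ring
    rwa [integral_const_mul] at hb1
  have hL : (∫ r in Ioc (0:ℝ) R, (r+a) ^ p) = ∫ s in a..(R+a), s ^ p := by
    rw [← intervalIntegral.integral_of_le hR0.le]
    have := intervalIntegral.integral_comp_add_right (a := 0) (b := R) (fun s : ℝ => s ^ p) a
    simpa using this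
  have hRm : (0:ℝ) < R ^ (-m) := rpow_pos_of_pos hR0 _
  have hT1 : (0:ℝ) ≤ R ^ ((d:ℝ) - k - m) := rpow_nonneg hR0.le _
  -- combine, case analysis on k vs d
  rcases lt_trichotomy k (d:ℝ) with hkd | hkd | hkd
  · -- k < d
    have hkd' : k ≠ (d:ℝ) := ne_of_lt hkd
    have hC1' : C1 = 2 ^ d / ((d:ℝ) - k) := by
      rw [hC1, if_neg hkd', if_neg (not_lt.mpr hkd.le)]
    have hLval : (∫ s in a..(R+a), s ^ p) = ((R+a) ^ (p+1) - a ^ (p+1)) / (p+1) :=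
      integral_rpow (Or.inl (by rw [hp]; linarith))
    have hp1 : p + 1 = (d:ℝ) - k := by rw [hp]; ring
    have hLb : (∫ s in a..(R+a), s ^ p) ≤ 2 ^ d * R ^ ((d:ℝ) - k) / ((d:ℝ) - k) := by
      rw [hLval, hp1]
      have h1 : (R+a) ^ ((d:ℝ)-k) ≤ 2 ^ d * R ^ ((d:ℝ)-k) := by
        calc (R+a) ^ ((d:ℝ)-k) ≤ (2*R) ^ ((d:ℝ)-k) :=
              rpow_le_rpow (by linarith) (by linarith) (by linarith)
          _ = 2 ^ ((d:ℝ)-k) * R ^ ((d:ℝ)-k) := mul_rpow (by norm_num) hR0.le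
          _ ≤ 2 ^ d * R ^ ((d:ℝ)-k) := by
              apply mul_le_mul_of_nonneg_right _ (rpow_nonneg hR0.le _)
              rw [show ((2:ℝ) ^ d) = (2:ℝ) ^ (d:ℝ) by rw [rpow_natCast]]
              exact rpow_le_rpow_of_exponent_le (by norm_num) (by linarith)
      have h2 : (0:ℝ) ≤ a ^ ((d:ℝ)-k) := rpow_nonneg ha.le _
      have h2 : (0:ℝ) ≤ a ^ ((d:ℝ)-k) := rpow_nonneg ha.le _
      have hdk : (0:ℝ) < (d:ℝ) - k := by linarith
      exact (div_le_div_iff_of_pos_right hdk).mpr (by linarith)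
    rw [hC1']
    have hK1 : (∫ r in Ioc (0:ℝ) R, g r) ≤ (2 ^ d / ((d:ℝ) - k)) * R ^ ((d:ℝ) - k - m) := by
      refine le_trans hnear ?_
      have := mul_le_mul_of_nonneg_left (hL ▸ hLb) hRm.le
      refine le_trans this (le_of_eq ?_)
      rw [show (d:ℝ) - k - m = -m + ((d:ℝ) - k) by ring, rpow_add hR0]
      ring
    rw [if_neg hkd', if_neg (not_lt.mpr hkd.le)]
    have hT : (0:ℝ) ≤ R ^ ((d:ℝ) - k - m) := hT1
    calc (∫ r in Ioi (0:ℝ), r ^ (d - 1) * (1 / ((r + a) ^ k * (r + R) ^ m)))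
        ≤ (∫ r in Ioc 0 R, g r) + ∫ r in Ioi R, g r := by rw [← hsplit]; exact step1
      _ ≤ (2 ^ d / ((d:ℝ) - k)) * R ^ ((d:ℝ) - k - m) + C2 * R ^ ((d:ℝ) - k - m) := by
          exact add_le_add hK1 hK2
      _ ≤ _ := by simp only [mul_zero, zero_mul, mul_one, add_zero]; linarith [mul_nonneg hC2pos.le hT1]
  · -- k = d
    have hp1 : p = -1 := by rw [hp, ← hkd]; ring
    have hC1' : C1 = Real.log 2 + 1 := by rw [hC1, if_pos hkd]
    have hLval : (∫ s in a..(R+a), s ^ p) = Real.log ((R+a)/a) := by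
      rw [hp1]
      simp only [Real.rpow_neg_one]
      exact integral_inv_of_pos ha (by linarith)
    have hLb : (∫ s in a..(R+a), s ^ p) ≤ Real.log 2 + Real.log (R/a) := by
      rw [hLval]
      have hra1 : (1:ℝ) ≤ R/a := (one_le_div ha).mpr haR
      have h1 : (R+a)/a ≤ 2*(R/a) := by
        rw [add_div, div_self (ne_of_gt ha)]
        linarith
      have h2 : Real.log ((R+a)/a) ≤ Real.log (2*(R/a)) :=
        Real.log_le_log (by positivity) h1
      rwa [Real.log_mul (by norm_num) (ne_of_gt (div_pos hR0 ha))] at h2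
    have hlognn : (0:ℝ) ≤ Real.log (R/a) :=
      Real.log_nonneg ((one_le_div ha).mpr haR)
    have hK1 : (∫ r in Ioc (0:ℝ) R, g r) ≤
        Real.log 2 * R ^ (-m) + R ^ (-m) * Real.log (R/a) := by
      refine le_trans hnear ?_
      have := mul_le_mul_of_nonneg_left (hL ▸ hLb) hRm.le
      refine le_trans this (le_of_eq (by ring))
    have hTm : R ^ ((d:ℝ) - k - m) = R ^ (-m) := by
      rw [show (d:ℝ) - k - m = -m by rw [← hkd]; ring]
    rw [if_pos hkd, if_neg (by rw [hkd]; exact lt_irrefl _)]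
    rw [hTm, hC1']
    have hlog2 : (0:ℝ) ≤ Real.log 2 := Real.log_nonneg (by norm_num)
    have hnn2 : (0:ℝ) ≤ R ^ (-m) * Real.log (R/a) := by positivity
    calc (∫ r in Ioi (0:ℝ), r ^ (d - 1) * (1 / ((r + a) ^ k * (r + R) ^ m)))
        ≤ (∫ r in Ioc 0 R, g r) + ∫ r in Ioi R, g r := by rw [← hsplit]; exact step1
      _ ≤ (Real.log 2 * R ^ (-m) + R ^ (-m) * Real.log (R/a)) + C2 * R ^ (-m) := by
          refine add_le_add hK1 ?_
          rw [← hTm]; exact hK2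
      _ ≤ _ := by
          simp only [mul_zero, zero_mul, mul_one, add_zero, one_mul]
          nlinarith [mul_nonneg hC2pos.le hnn2, mul_nonneg hlog2 hnn2, hRm.le]
  · -- d < k
    have hkd' : k ≠ (d:ℝ) := ne_of_gt hkd
    have hC1' : C1 = 1 / (k - (d:ℝ)) := by rw [hC1, if_neg hkd', if_pos hkd]
    have hp1 : p + 1 = (d:ℝ) - k := by rw [hp]; ring
    have hpne : p ≠ -1 := by
      intro h
      rw [hp] at h
      exact hkd' (by linarith)
    have hLval : (∫ s in a..(R+a), s ^ p) = ((R+a) ^ (p+1) - a ^ (p+1)) / (p+1) :=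
      integral_rpow (Or.inr ⟨hpne, Set.notMem_uIcc_of_lt ha (by linarith)⟩)
    have hLb : (∫ s in a..(R+a), s ^ p) ≤ a ^ ((d:ℝ)-k) / (k - (d:ℝ)) := by
      rw [hLval, hp1]
      have h1 : (0:ℝ) ≤ (R+a) ^ ((d:ℝ)-k) := rpow_nonneg (by linarith) _
      have hdk : (0:ℝ) < k - (d:ℝ) := by linarith
      have e4 : ((R+a) ^ ((d:ℝ)-k) - a ^ ((d:ℝ)-k))/((d:ℝ)-k)
          = (a ^ ((d:ℝ)-k) - (R+a) ^ ((d:ℝ)-k))/(k-(d:ℝ)) := by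
        rw [show (d:ℝ)-k = -(k-(d:ℝ)) by ring, div_neg]
        ring
      rw [e4]
      exact (div_le_div_iff_of_pos_right hdk).mpr (by linarith)
    have hK1 : (∫ r in Ioc (0:ℝ) R, g r) ≤
        (1 / (k - (d:ℝ))) * (R ^ (-m) * a ^ ((d:ℝ)-k)) := by
      refine le_trans hnear ?_
      have := mul_le_mul_of_nonneg_left (hL ▸ hLb) hRm.le
      refine le_trans this (le_of_eq (by ring))
    rw [if_neg hkd', if_pos hkd, hC1']
    have hnn3 : (0:ℝ) ≤ R ^ (-m) * a ^ ((d:ℝ)-k) := by positivity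
    have hdk : (0:ℝ) < 1 / (k - (d:ℝ)) := by
      have : (0:ℝ) < k - (d:ℝ) := by linarith
      positivity
    calc (∫ r in Ioi (0:ℝ), r ^ (d - 1) * (1 / ((r + a) ^ k * (r + R) ^ m)))
        ≤ (∫ r in Ioc 0 R, g r) + ∫ r in Ioi R, g r := by rw [← hsplit]; exact step1
      _ ≤ (1 / (k - (d:ℝ))) * (R ^ (-m) * a ^ ((d:ℝ)-k)) + C2 * R ^ ((d:ℝ)-k-m) :=
          add_le_add hK1 hK2
      _ ≤ _ := by
          simp only [mul_zero, zero_mul, mul_one, add_zero, zero_add, one_mul]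
          nlinarith [mul_nonneg hC2pos.le hnn3, mul_nonneg hdk.le hT1]


lemma integrable_radial (d : ℕ) (k m c e : ℝ) (hk : 0 ≤ k) (hm : 0 ≤ m)
    (hkm : (d:ℝ) < k + m) (hc : 0 < c) (he : 0 < e) :
    Integrable (fun z : EuclideanSpace ℝ (Fin d) => 1 / ((‖z‖ + c) ^ k * (‖z‖ + e) ^ m)) := by
  have hdim : (Module.finrank ℝ (EuclideanSpace ℝ (Fin d)) : ℝ) < k + m := by
    rw [finrank_euclideanSpace_fin]; exact hkm
  have hmc : 0 < min 1 c := lt_min one_pos hc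
  have hme : 0 < min 1 e := lt_min one_pos he
  have base := (integrable_one_add_norm (E := EuclideanSpace ℝ (Fin d)) (μ := volume) hdim).const_mul
      ((min 1 c) ^ (-k) * (min 1 e) ^ (-m))
  apply base.mono'
  · apply Continuous.aestronglyMeasurable
    apply Continuous.div continuous_const
    · apply Continuous.mul
      · exact (continuous_norm.add continuous_const).rpow_const
          (fun z => Or.inr hk)
      · exact (continuous_norm.add continuous_const).rpow_const
          (fun z => Or.inr hm)
    · intro z
      have := norm_nonneg z
      positivity
  · filter_upwards with z
    have ht : (0:ℝ) ≤ ‖z‖ := norm_nonneg z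
    set t := ‖z‖ with htdef
    have h1 : min 1 c * (1+t) ≤ t + c := by
      nlinarith [min_le_left (1:ℝ) c, min_le_right (1:ℝ) c,
        mul_le_mul_of_nonneg_right (min_le_left (1:ℝ) c) ht]
    have h1' : min 1 e * (1+t) ≤ t + e := by
      nlinarith [min_le_left (1:ℝ) e, min_le_right (1:ℝ) e,
        mul_le_mul_of_nonneg_right (min_le_left (1:ℝ) e) ht]
    have h2 : (min 1 c) ^ k * (1+t) ^ k ≤ (t + c) ^ k := by
      rw [← mul_rpow hmc.le (by linarith)]
      exact rpow_le_rpow (by positivity) h1 hk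
    have h3 : (min 1 e) ^ m * (1+t) ^ m ≤ (t + e) ^ m := by
      rw [← mul_rpow hme.le (by linarith)]
      exact rpow_le_rpow (by positivity) h1' hm
    have e1 : (min 1 c ^ k * (1+t) ^ k) * (min 1 e ^ m * (1+t) ^ m)
        = (min 1 c ^ k * min 1 e ^ m) * (1+t) ^ (k+m) := by
      rw [rpow_add (by linarith : (0:ℝ) < 1 + t)]; ring
    have e2 : (min 1 c) ^ (-k) * (min 1 e) ^ (-m) * (1+t) ^ (-(k+m))
        = ((min 1 c ^ k * (1+t) ^ k) * (min 1 e ^ m * (1+t) ^ m))⁻¹ := by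
      rw [e1, rpow_neg hmc.le, rpow_neg hme.le, rpow_neg (by linarith : (0:ℝ) ≤ 1+t),
        mul_inv, mul_inv]
    have hpos : (0:ℝ) < (t + c) ^ k * (t + e) ^ m := by positivity
    rw [Real.norm_eq_abs, abs_of_nonneg (by positivity), e2, one_div]
    apply inv_anti₀ (by positivity)
    apply mul_le_mul h2 h3 (by positivity) (by positivity)

set_option maxHeartbeats 1000000 in
/-- Lemma 2.2: For `d ≥ 1`, `a, b > 0`, `k, m ≥ 0` with `k + m > d`,
and `0 ≠ x ∈ ℝ^d`, with `R = max{|x|, a, b}`,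
`∫_{ℝ^d} dz/((|z|+a)^k (|z-x|+b)^m) ≤ C [R^(d-k-m) + δ_{k=d} R^(-m) log(R/a)
 + δ_{m=d} R^(-k) log(R/b) + 𝟙_{k>d} R^(-m) a^(d-k) + 𝟙_{m>d} R^(-k) b^(d-m)]`,
where `C = C(d,k,m)`. -/
theorem integral_two_weights_bound (d : ℕ) (hd : 1 ≤ d) (k m : ℝ) (hk : 0 ≤ k) (hm : 0 ≤ m)
    (hkm : (d : ℝ) < k + m) :
    ∃ C : ℝ, 0 < C ∧ ∀ (a b : ℝ), 0 < a → 0 < b →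
      ∀ x : EuclideanSpace ℝ (Fin d), x ≠ 0 →
      (∫ z : EuclideanSpace ℝ (Fin d), 1 / ((‖z‖ + a) ^ k * (‖z - x‖ + b) ^ m)) ≤
        C * ((max ‖x‖ (max a b)) ^ ((d : ℝ) - k - m)
          + (if k = (d : ℝ) then 1 else 0) * (max ‖x‖ (max a b)) ^ (-m) *
              Real.log (max ‖x‖ (max a b) / a)
          + (if m = (d : ℝ) then 1 else 0) * (max ‖x‖ (max a b)) ^ (-k) *
              Real.log (max ‖x‖ (max a b) / b)
          + (if (d : ℝ) < k then 1 else 0) * (max ‖x‖ (max a b)) ^ (-m) * a ^ ((d : ℝ) - k)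
          + (if (d : ℝ) < m then 1 else 0) * (max ‖x‖ (max a b)) ^ (-k) * b ^ ((d : ℝ) - m)) := by
  classical
  obtain ⟨C₁, hC₁, H₁⟩ := oneD_bound d hd k m hk hm hkm
  obtain ⟨C₂, hC₂, H₂⟩ := oneD_bound d hd m k hm hk (by linarith)
  haveI : Nonempty (Fin d) := ⟨⟨0, hd⟩⟩
  set κ : ℝ := d * (volume (Metric.ball (0 : EuclideanSpace ℝ (Fin d)) 1)).toReal with hκ
  have hκ0 : 0 ≤ κ := by positivity
  have h4m : (0:ℝ) < 4 ^ m := rpow_pos_of_pos (by norm_num) m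
  have h4k : (0:ℝ) < 4 ^ k := rpow_pos_of_pos (by norm_num) k
  refine ⟨κ * ((4:ℝ) ^ m * C₁) + κ * ((4:ℝ) ^ k * C₂) + 1, by positivity,
    fun a b ha hb x hx => ?_⟩
  set R := max ‖x‖ (max a b) with hR
  have haR : a ≤ R := le_trans (le_max_left a b) (le_max_right _ _)
  have hbR : b ≤ R := le_trans (le_max_right a b) (le_max_right _ _)
  have hxR : ‖x‖ ≤ R := le_max_left _ _
  have hR0 : 0 < R := lt_of_lt_of_le ha haR
  set g : EuclideanSpace ℝ (Fin d) → ℝ :=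
    fun z => 1 / ((‖z‖ + a) ^ k * (‖z‖ + R) ^ m) with hg
  set h : EuclideanSpace ℝ (Fin d) → ℝ :=
    fun z => 1 / ((‖z‖ + R) ^ k * (‖z‖ + b) ^ m) with hh
  have hgInt : Integrable g := integrable_radial d k m a R hk hm hkm ha hR0
  have hhInt : Integrable h := integrable_radial d k m R b hk hm hkm hR0 hb
  have hhInt' : Integrable (fun z => h (z - x)) := hhInt.comp_sub_right x
  have hdom : Integrable (fun z => 4 ^ m * g z + 4 ^ k * h (z - x)) :=
    (hgInt.const_mul _).add (hhInt'.const_mul _)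
  -- step 1: pointwise bound and monotonicity
  have hmono : (∫ z : EuclideanSpace ℝ (Fin d), 1 / ((‖z‖ + a) ^ k * (‖z - x‖ + b) ^ m))
      ≤ ∫ z : EuclideanSpace ℝ (Fin d), (4 ^ m * g z + 4 ^ k * h (z - x)) := by
    apply integral_mono_of_nonneg
    · filter_upwards with z
      have h1 : (0:ℝ) ≤ ‖z‖ := norm_nonneg _
      have h2 : (0:ℝ) ≤ ‖z - x‖ := norm_nonneg _
      positivity
    · exact hdom
    · filter_upwards with z
      have huv : ‖z‖ ≤ ‖z - x‖ + R := by
        have h1 : ‖z‖ ≤ ‖z - x‖ + ‖x‖ := by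
          simpa using norm_add_le (z - x) x
        linarith
      have hvu : ‖z - x‖ ≤ ‖z‖ + R := by
        have h1 : ‖z - x‖ ≤ ‖z‖ + ‖x‖ := norm_sub_le z x
        linarith
      have hsum : R ≤ ‖z‖ + ‖z - x‖ + a + b := by
        have h1 : ‖x‖ ≤ ‖z‖ + ‖z - x‖ := by
          have := norm_sub_le z (z - x)
          simpa using this
        have h2 : (0:ℝ) ≤ ‖z‖ := norm_nonneg _
        have h3 : (0:ℝ) ≤ ‖z - x‖ := norm_nonneg _
        rw [hR]
        apply max_le (by linarith)
        apply max_le (by linarith) (by linarith)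
      exact ptwise_bound k m a b R ‖z‖ ‖z - x‖ hk hm ha hb (norm_nonneg _)
        (norm_nonneg _) haR hbR huv hvu hsum
  -- step 2: split the integral
  have hsplit : (∫ z : EuclideanSpace ℝ (Fin d), (4 ^ m * g z + 4 ^ k * h (z - x)))
      = 4 ^ m * (∫ z, g z) + 4 ^ k * (∫ z, h z) := by
    rw [integral_add (hgInt.const_mul _) (hhInt'.const_mul _), integral_const_mul,
      integral_const_mul, integral_sub_right_eq_self h x]
  -- step 3: polar coordinates
  have hpolar_g : (∫ z, g z)
      = κ * ∫ r in Ioi (0:ℝ), r ^ (d - 1) * (1 / ((r + a) ^ k * (r + R) ^ m)) := by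
    have := integral_fun_norm_addHaar (volume : Measure (EuclideanSpace ℝ (Fin d)))
      (fun r : ℝ => 1 / ((r + a) ^ k * (r + R) ^ m))
    rw [finrank_euclideanSpace_fin] at this
    simp only [smul_eq_mul, nsmul_eq_mul] at this
    rw [hg]
    rw [this, hκ, mul_assoc]
    rfl
  have hpolar_h : (∫ z, h z)
      = κ * ∫ r in Ioi (0:ℝ), r ^ (d - 1) * (1 / ((r + R) ^ k * (r + b) ^ m)) := by
    have := integral_fun_norm_addHaar (volume : Measure (EuclideanSpace ℝ (Fin d)))
      (fun r : ℝ => 1 / ((r + R) ^ k * (r + b) ^ m))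
    rw [finrank_euclideanSpace_fin] at this
    simp only [smul_eq_mul, nsmul_eq_mul] at this
    rw [hh]
    rw [this, hκ, mul_assoc]
    rfl
  -- step 4: apply the 1-D bounds
  have hJ1 := H₁ a R ha haR
  have hJ2 := H₂ b R hb hbR
  have hcomm : (∫ r in Ioi (0:ℝ), r ^ (d - 1) * (1 / ((r + R) ^ k * (r + b) ^ m)))
      = ∫ r in Ioi (0:ℝ), r ^ (d - 1) * (1 / ((r + b) ^ m * (r + R) ^ k)) := by
    apply integral_congr_ae
    filter_upwards with r
    rw [mul_comm ((r + R) ^ k) ((r + b) ^ m)]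
  rw [show (d:ℝ) - m - k = (d:ℝ) - k - m by ring] at hJ2
  -- step 5: assemble
  set T1 := R ^ ((d:ℝ) - k - m) with hT1d
  set T2 := (if k = (d:ℝ) then (1:ℝ) else 0) * R ^ (-m) * Real.log (R / a) with hT2d
  set T3 := (if m = (d:ℝ) then (1:ℝ) else 0) * R ^ (-k) * Real.log (R / b) with hT3d
  set T4 := (if (d:ℝ) < k then (1:ℝ) else 0) * R ^ (-m) * a ^ ((d:ℝ) - k) with hT4d
  set T5 := (if (d:ℝ) < m then (1:ℝ) else 0) * R ^ (-k) * b ^ ((d:ℝ) - m) with hT5d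
  have hT1 : 0 ≤ T1 := rpow_nonneg hR0.le _
  have hloga : 0 ≤ Real.log (R / a) := Real.log_nonneg ((one_le_div ha).mpr haR)
  have hlogb : 0 ≤ Real.log (R / b) := Real.log_nonneg ((one_le_div hb).mpr hbR)
  have hT2 : 0 ≤ T2 := by
    rw [hT2d]; split_ifs
    · simpa using mul_nonneg (rpow_nonneg hR0.le (-m)) hloga
    · simp
  have hT3 : 0 ≤ T3 := by
    rw [hT3d]; split_ifs
    · simpa using mul_nonneg (rpow_nonneg hR0.le (-k)) hlogb
    · simp
  have hT4 : 0 ≤ T4 := by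
    rw [hT4d]; split_ifs
    · simpa using mul_nonneg (rpow_nonneg hR0.le (-m)) (rpow_nonneg ha.le _)
    · simp
  have hT5 : 0 ≤ T5 := by
    rw [hT5d]; split_ifs
    · simpa using mul_nonneg (rpow_nonneg hR0.le (-k)) (rpow_nonneg hb.le _)
    · simp
  have hB1 : (∫ z, g z) ≤ κ * (C₁ * (T1 + T2 + T4)) := by
    rw [hpolar_g]
    exact mul_le_mul_of_nonneg_left hJ1 hκ0
  have hB2 : (∫ z, h z) ≤ κ * (C₂ * (T1 + T3 + T5)) := by
    rw [hpolar_h, hcomm]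
    exact mul_le_mul_of_nonneg_left hJ2 hκ0
  calc (∫ z : EuclideanSpace ℝ (Fin d), 1 / ((‖z‖ + a) ^ k * (‖z - x‖ + b) ^ m))
      ≤ 4 ^ m * (∫ z, g z) + 4 ^ k * (∫ z, h z) := by rw [← hsplit]; exact hmono
    _ ≤ 4 ^ m * (κ * (C₁ * (T1 + T2 + T4))) + 4 ^ k * (κ * (C₂ * (T1 + T3 + T5))) :=
        add_le_add (mul_le_mul_of_nonneg_left hB1 h4m.le)
          (mul_le_mul_of_nonneg_left hB2 h4k.le)
    _ ≤ (κ * ((4:ℝ) ^ m * C₁) + κ * ((4:ℝ) ^ k * C₂) + 1) * (T1 + T2 + T3 + T4 + T5) := by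
        have e1 : 4 ^ m * (κ * (C₁ * (T1 + T2 + T4))) = (κ * ((4:ℝ) ^ m * C₁)) * (T1 + T2 + T4) := by ring
        have e2 : 4 ^ k * (κ * (C₂ * (T1 + T3 + T5))) = (κ * ((4:ℝ) ^ k * C₂)) * (T1 + T3 + T5) := by ring
        rw [e1, e2]
        have p1 : (0:ℝ) ≤ κ * ((4:ℝ) ^ m * C₁) := by positivity
        have p2 : (0:ℝ) ≤ κ * ((4:ℝ) ^ k * C₂) := by positivity
        nlinarith [mul_nonneg p1 (by linarith : (0:ℝ) ≤ T3 + T5),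
          mul_nonneg p2 (by linarith : (0:ℝ) ≤ T2 + T4),
          mul_nonneg (by linarith : (0:ℝ) ≤ T1 + T2 + T3 + T4 + T5) (le_refl (0:ℝ))]
    _ = _ := by rw [hT1d, hT2d, hT3d, hT4d, hT5d]
end

section
/- Let k > 1 and m ≥ 0 be real numbers and let A > 0. Set R = A + 1. Then there is a constant C depending only on k and m such that ∫_0^∞ dz / ((z+A)^k (z+1)^m) ≤ C [ R^{−m} A^{1−k} + δ_{m=1} R^{−k} log R + 𝟙_{m>1} R^{−k} ]. -/
open Real MeasureTheory

set_option maxHeartbeats 1000000 in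
/-- estimate (lemma2.2d1) of Lemma 2.2: For `k > 1`, `m ≥ 0`, `A > 0`,
with `R = A + 1`,
`∫_0^∞ dz/((z+A)^k (z+1)^m) ≤ C [R^(-m) A^(1-k) + δ_{m=1} R^(-k) log R + 𝟙_{m>1} R^(-k)]`,
where `C = C(k,m)`. -/
theorem integral_one_dim_bound (k m : ℝ) (hk : 1 < k) (hm : 0 ≤ m) :
    ∃ C : ℝ, 0 < C ∧ ∀ A : ℝ, 0 < A →
      (∫ z in Set.Ioi (0:ℝ), 1 / ((z + A) ^ k * (z + 1) ^ m)) ≤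
        C * ((A + 1) ^ (-m) * A ^ (1 - k)
          + (if m = 1 then 1 else 0) * (A + 1) ^ (-k) * Real.log (A + 1)
          + (if 1 < m then 1 else 0) * (A + 1) ^ (-k)) := by
  have hk1 : (0:ℝ) < k - 1 := by linarith
  have hkm1 : (0:ℝ) < k + m - 1 := by linarith
  set D : ℝ := if m < 1 then 2 ^ (2 - m) / (1 - m) else if m = 1 then 2 ^ (k + 1)
      else 2 ^ k / (m - 1) with hDdef
  have hD : 0 < D := by
    rw [hDdef]
    split_ifs with h1 h2
    · exact div_pos (Real.rpow_pos_of_pos two_pos _) (by linarith)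
    · exact Real.rpow_pos_of_pos two_pos _
    · push_neg at h1
      have : 1 < m := lt_of_le_of_ne h1 (Ne.symm h2)
      exact div_pos (Real.rpow_pos_of_pos two_pos _) (by linarith)
  have hC : 0 < (k + m - 1)⁻¹ + 2 ^ m * (k - 1)⁻¹ + D :=
    add_pos (add_pos (inv_pos.2 hkm1)
      (mul_pos (Real.rpow_pos_of_pos two_pos m) (inv_pos.2 hk1))) hD
  refine ⟨(k + m - 1)⁻¹ + 2 ^ m * (k - 1)⁻¹ + D, hC, ?_⟩
  intro A hA
  set R : ℝ := A + 1 with hRdef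
  have hR1 : (1:ℝ) < R := by rw [hRdef]; linarith
  have hR0 : (0:ℝ) < R := by linarith
  -- measurability
  have hfm : Measurable fun z : ℝ => 1 / ((z + A) ^ k * (z + 1) ^ m) := by fun_prop
  have hfnn : ∀ z : ℝ, 0 ≤ z → 0 ≤ 1 / ((z + A) ^ k * (z + 1) ^ m) := by
    intro z hz
    have h1 : (0:ℝ) < z + A := by linarith
    have h2 : (0:ℝ) < z + 1 := by linarith
    positivity
  -- tail pointwise bound
  have htb : ∀ z ∈ Set.Ioi R, 1 / ((z + A) ^ k * (z + 1) ^ m) ≤ z ^ (-(k + m)) := by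
    intro z hz
    have hz1 : (1:ℝ) < z := lt_trans hR1 hz
    have hz0 : (0:ℝ) < z := by linarith
    have h1 : z ^ k ≤ (z + A) ^ k := Real.rpow_le_rpow hz0.le (by linarith) (by linarith)
    have h2 : z ^ m ≤ (z + 1) ^ m := Real.rpow_le_rpow hz0.le (by linarith) hm
    have hzk : (0:ℝ) < z ^ k := Real.rpow_pos_of_pos hz0 k
    have hzm : (0:ℝ) < z ^ m := Real.rpow_pos_of_pos hz0 m
    have he : z ^ (-(k + m)) = 1 / (z ^ k * z ^ m) := by
      rw [← Real.rpow_add hz0, Real.rpow_neg hz0.le, one_div]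
    rw [he]
    apply one_div_le_one_div_of_le (by positivity)
    exact mul_le_mul h1 h2 hzm.le (Real.rpow_nonneg (by linarith) _)
  have hg_int : IntegrableOn (fun z : ℝ => z ^ (-(k + m))) (Set.Ioi R) :=
    integrableOn_Ioi_rpow_of_lt (by linarith) hR0
  have hf_int_tail : IntegrableOn (fun z : ℝ => 1 / ((z + A) ^ k * (z + 1) ^ m))
      (Set.Ioi R) := by
    refine hg_int.mono' hfm.aestronglyMeasurable.restrict ?_
    filter_upwards [ae_restrict_mem measurableSet_Ioi] with z hz
    rw [Real.norm_eq_abs, abs_of_nonneg (hfnn z (by have := Set.mem_Ioi.mp hz; linarith))]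
    exact htb z hz
  -- tail integral bound
  have hT : (∫ z in Set.Ioi R, 1 / ((z + A) ^ k * (z + 1) ^ m)) ≤
      (k + m - 1)⁻¹ * (R ^ (-m) * A ^ (1 - k)) := by
    have h1 : (∫ z in Set.Ioi R, 1 / ((z + A) ^ k * (z + 1) ^ m)) ≤
        ∫ z in Set.Ioi R, z ^ (-(k + m)) :=
      setIntegral_mono_on hf_int_tail hg_int measurableSet_Ioi htb
    rw [integral_Ioi_rpow_of_lt (by linarith) hR0] at h1
    have e2 : R ^ (1 - k) ≤ A ^ (1 - k) :=
      Real.rpow_le_rpow_of_nonpos hA (by rw [hRdef]; linarith) (by linarith)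
    have e3 : -R ^ (-(k + m) + 1) / (-(k + m) + 1) =
        (k + m - 1)⁻¹ * (R ^ (-m) * R ^ (1 - k)) := by
      rw [← Real.rpow_add hR0]
      rw [show (-m + (1 - k) : ℝ) = -(k + m) + 1 by ring]
      rw [show (-(k + m) + 1 : ℝ) = -(k + m - 1) by ring]
      rw [neg_div_neg_eq, div_eq_mul_inv, mul_comm]
    rw [e3] at h1
    refine h1.trans ?_
    have hr : (0:ℝ) ≤ R ^ (-m) := Real.rpow_nonneg hR0.le _
    exact mul_le_mul_of_nonneg_left (mul_le_mul_of_nonneg_left e2 hr) (inv_pos.2 hkm1).le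
  -- head pointwise bounds
  have hp1 : ∀ z ∈ Set.Ioc (0:ℝ) R, 1 / ((z + A) ^ k * (z + 1) ^ m) ≤ (z + A) ^ (-k) := by
    intro z hz
    obtain ⟨hz0, _⟩ := hz
    have hzA : (0:ℝ) < z + A := by linarith
    have h2 : (1:ℝ) ≤ (z + 1) ^ m := Real.one_le_rpow (by linarith) hm
    have hk0 : (0:ℝ) < (z + A) ^ k := Real.rpow_pos_of_pos hzA k
    rw [Real.rpow_neg hzA.le, ← one_div]
    apply one_div_le_one_div_of_le hk0
    nlinarith
  have hp2 : ∀ z ∈ Set.Ioc (0:ℝ) R, 1 / ((z + A) ^ k * (z + 1) ^ m) ≤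
      A ^ (-k) * (z + 1) ^ (-m) := by
    intro z hz
    obtain ⟨hz0, _⟩ := hz
    have hz1 : (0:ℝ) < z + 1 := by linarith
    have hzA : (0:ℝ) < z + A := by linarith
    have h1 : A ^ k ≤ (z + A) ^ k := Real.rpow_le_rpow hA.le (by linarith) (by linarith)
    have hAk : (0:ℝ) < A ^ k := Real.rpow_pos_of_pos hA k
    have hzm : (0:ℝ) < (z + 1) ^ m := Real.rpow_pos_of_pos hz1 m
    rw [Real.rpow_neg hA.le, Real.rpow_neg hz1.le, ← mul_inv, ← one_div]
    apply one_div_le_one_div_of_le (by positivity)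
    exact mul_le_mul_of_nonneg_right h1 hzm.le
  -- integrability on the head
  have hconst : IntegrableOn (fun _ : ℝ => A ^ (-k)) (Set.Ioc (0:ℝ) R) :=
    integrableOn_const measure_Ioc_lt_top.ne
  have hf_int_head : IntegrableOn (fun z : ℝ => 1 / ((z + A) ^ k * (z + 1) ^ m))
      (Set.Ioc (0:ℝ) R) := by
    refine hconst.mono' hfm.aestronglyMeasurable.restrict ?_
    filter_upwards [ae_restrict_mem measurableSet_Ioc] with z hz
    rw [Real.norm_eq_abs, abs_of_nonneg (hfnn z hz.1.le)]
    calc 1 / ((z + A) ^ k * (z + 1) ^ m) ≤ A ^ (-k) * (z + 1) ^ (-m) := hp2 z hz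
      _ ≤ A ^ (-k) * 1 := by
          apply mul_le_mul_of_nonneg_left _ (Real.rpow_nonneg hA.le _)
          exact Real.rpow_le_one_of_one_le_of_nonpos (by linarith [hz.1]) (by linarith)
      _ = A ^ (-k) := mul_one _
  have hg1_int : IntegrableOn (fun z : ℝ => (z + A) ^ (-k)) (Set.Ioc (0:ℝ) R) := by
    have hmg : Measurable fun z : ℝ => (z + A) ^ (-k) := by fun_prop
    refine hconst.mono' hmg.aestronglyMeasurable.restrict ?_
    filter_upwards [ae_restrict_mem measurableSet_Ioc] with z hz
    have hzA : (0:ℝ) < z + A := by have := hz.1; linarith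
    rw [Real.norm_eq_abs, abs_of_nonneg (Real.rpow_nonneg hzA.le _)]
    exact Real.rpow_le_rpow_of_nonpos hA (by linarith [hz.1]) (by linarith)
  have hg2_int : IntegrableOn (fun z : ℝ => A ^ (-k) * (z + 1) ^ (-m))
      (Set.Ioc (0:ℝ) R) := by
    have hmg : Measurable fun z : ℝ => A ^ (-k) * (z + 1) ^ (-m) := by fun_prop
    refine hconst.mono' hmg.aestronglyMeasurable.restrict ?_
    filter_upwards [ae_restrict_mem measurableSet_Ioc] with z hz
    have hz1 : (0:ℝ) < z + 1 := by have := hz.1; linarith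
    have hAk : (0:ℝ) ≤ A ^ (-k) := Real.rpow_nonneg hA.le _
    rw [Real.norm_eq_abs, abs_of_nonneg (mul_nonneg hAk (Real.rpow_nonneg hz1.le _))]
    calc A ^ (-k) * (z + 1) ^ (-m) ≤ A ^ (-k) * 1 := by
          apply mul_le_mul_of_nonneg_left _ hAk
          exact Real.rpow_le_one_of_one_le_of_nonpos (by linarith [hz.1]) (by linarith)
      _ = A ^ (-k) := mul_one _
  -- split the integral
  have hsplit : (∫ z in Set.Ioi (0:ℝ), 1 / ((z + A) ^ k * (z + 1) ^ m)) =
      (∫ z in Set.Ioc (0:ℝ) R, 1 / ((z + A) ^ k * (z + 1) ^ m)) +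
        ∫ z in Set.Ioi R, 1 / ((z + A) ^ k * (z + 1) ^ m) := by
    rw [← setIntegral_union (Set.Ioc_disjoint_Ioi le_rfl) measurableSet_Ioi
      hf_int_head hf_int_tail, Set.Ioc_union_Ioi_eq_Ioi hR0.le]
  rw [hsplit]
  have hd1 : (0:ℝ) ≤ (if m = 1 then (1:ℝ) else 0) := by split_ifs <;> norm_num
  have hd2 : (0:ℝ) ≤ (if 1 < m then (1:ℝ) else 0) := by split_ifs <;> norm_num
  have hlog : 0 ≤ Real.log R := Real.log_nonneg hR1.le
  have hP1 : (0:ℝ) ≤ R ^ (-m) * A ^ (1 - k) := by positivity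
  have hP3 : (0:ℝ) ≤ R ^ (-k) := Real.rpow_nonneg hR0.le _
  have ht2 : (0:ℝ) ≤ (if m = 1 then (1:ℝ) else 0) * R ^ (-k) * Real.log R :=
    mul_nonneg (mul_nonneg hd1 hP3) hlog
  have ht3 : (0:ℝ) ≤ (if 1 < m then (1:ℝ) else 0) * R ^ (-k) :=
    mul_nonneg hd2 hP3
  rcases le_total A 1 with hA1 | hA1
  · -- small A : the whole head is bounded by ∫ (z+A)^(-k)
    have hH : (∫ z in Set.Ioc (0:ℝ) R, 1 / ((z + A) ^ k * (z + 1) ^ m)) ≤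
        (k - 1)⁻¹ * A ^ (1 - k) := by
      have h1 : (∫ z in Set.Ioc (0:ℝ) R, 1 / ((z + A) ^ k * (z + 1) ^ m)) ≤
          ∫ z in Set.Ioc (0:ℝ) R, (z + A) ^ (-k) :=
        setIntegral_mono_on hf_int_head hg1_int measurableSet_Ioc hp1
      have h0 : (0:ℝ) ∉ Set.uIcc (0 + A) (R + A) := by
        rw [Set.uIcc_of_le (by linarith)]
        simp only [Set.mem_Icc, not_and]
        intro h; linarith
      have h2 : (∫ z in Set.Ioc (0:ℝ) R, (z + A) ^ (-k)) =
          ((R + A) ^ (-k + 1) - (0 + A) ^ (-k + 1)) / (-k + 1) := by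
        rw [← intervalIntegral.integral_of_le hR0.le,
            intervalIntegral.integral_comp_add_right (fun x => x ^ (-k)) A,
            integral_rpow (Or.inr ⟨ne_of_lt (by linarith), h0⟩)]
      rw [zero_add, show (-k + 1 : ℝ) = 1 - k by ring] at h2
      rw [h2] at h1
      refine h1.trans ?_
      have hX : (0:ℝ) ≤ (R + A) ^ (1 - k) := Real.rpow_nonneg (by linarith) _
      have hY : (0:ℝ) ≤ A ^ (1 - k) := Real.rpow_nonneg hA.le _
      have e : ((R + A) ^ (1 - k) - A ^ (1 - k)) / (1 - k) =
          (A ^ (1 - k) - (R + A) ^ (1 - k)) * (k - 1)⁻¹ := by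
        have hne1 : (1 - k : ℝ) ≠ 0 := by intro h; linarith
        have hne2 : (k - 1 : ℝ) ≠ 0 := by intro h; linarith
        field_simp
        ring
      rw [e, mul_comm]
      nlinarith [mul_nonneg (inv_pos.2 hk1).le hX, mul_nonneg (inv_pos.2 hk1).le hY]
    -- turn into the R^(-m) * A^(1-k) shape
    have hRm : (2:ℝ) ^ (-m) ≤ R ^ (-m) :=
      Real.rpow_le_rpow_of_nonpos hR0 (by rw [hRdef]; linarith) (by linarith)
    have h2m : (2:ℝ) ^ m * 2 ^ (-m) = 1 := by
      rw [← Real.rpow_add two_pos, add_neg_cancel, Real.rpow_zero]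
    have h1le : (1:ℝ) ≤ 2 ^ m * R ^ (-m) := by
      calc (1:ℝ) = 2 ^ m * 2 ^ (-m) := h2m.symm
        _ ≤ 2 ^ m * R ^ (-m) :=
            mul_le_mul_of_nonneg_left hRm (Real.rpow_nonneg (by norm_num) m)
    have hH' : (∫ z in Set.Ioc (0:ℝ) R, 1 / ((z + A) ^ k * (z + 1) ^ m)) ≤
        2 ^ m * (k - 1)⁻¹ * (R ^ (-m) * A ^ (1 - k)) := by
      refine hH.trans ?_
      have hY : (0:ℝ) ≤ A ^ (1 - k) := Real.rpow_nonneg hA.le _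
      have hf := mul_le_mul_of_nonneg_left h1le (mul_nonneg (inv_pos.2 hk1).le hY)
      linarith [hf]
    linarith [hH', hT, mul_nonneg hD.le hP1, mul_nonneg hC.le ht2, mul_nonneg hC.le ht3]
  · -- large A
    have hRle : R ≤ 2 * A := by rw [hRdef]; linarith
    have hR2 : (2:ℝ) ≤ R := by rw [hRdef]; linarith
    have h0 : (0:ℝ) ∉ Set.uIcc (0 + 1 : ℝ) (R + 1) := by
      rw [Set.uIcc_of_le (by linarith)]
      simp only [Set.mem_Icc, not_and]
      intro h; linarith
    have hHa : (∫ z in Set.Ioc (0:ℝ) R, 1 / ((z + A) ^ k * (z + 1) ^ m)) ≤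
        A ^ (-k) * ∫ x in (0 + 1 : ℝ)..(R + 1), x ^ (-m) := by
      have h1 : (∫ z in Set.Ioc (0:ℝ) R, 1 / ((z + A) ^ k * (z + 1) ^ m)) ≤
          ∫ z in Set.Ioc (0:ℝ) R, A ^ (-k) * (z + 1) ^ (-m) :=
        setIntegral_mono_on hf_int_head hg2_int measurableSet_Ioc hp2
      have h2 : (∫ z in Set.Ioc (0:ℝ) R, A ^ (-k) * (z + 1) ^ (-m)) =
          A ^ (-k) * ∫ x in (0 + 1 : ℝ)..(R + 1), x ^ (-m) := by
        rw [← intervalIntegral.integral_of_le hR0.le,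
            intervalIntegral.integral_const_mul,
            intervalIntegral.integral_comp_add_right (fun x => x ^ (-m)) 1]
      rw [h2] at h1; exact h1
    have hAnk : (0:ℝ) ≤ A ^ (-k) := Real.rpow_nonneg hA.le _
    have hAk2 : A ^ (-k) ≤ 2 ^ k * R ^ (-k) := by
      have h1 : (2 * A) ^ (-k) ≤ R ^ (-k) :=
        Real.rpow_le_rpow_of_nonpos hR0 hRle (by linarith)
      have h2 : (2 * A) ^ (-k) = 2 ^ (-k) * A ^ (-k) := Real.mul_rpow (by norm_num) hA.le
      have h3 : (2:ℝ) ^ k * 2 ^ (-k) = 1 := by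
        rw [← Real.rpow_add two_pos, add_neg_cancel, Real.rpow_zero]
      have h4 : (0:ℝ) < (2:ℝ) ^ k := Real.rpow_pos_of_pos two_pos _
      nlinarith [mul_le_mul_of_nonneg_left (h2 ▸ h1) h4.le]
    have hY : A ^ (1 - k) = A * A ^ (-k) := by
      rw [show (1 - k : ℝ) = 1 + -k by ring, Real.rpow_add hA, Real.rpow_one]
    rcases lt_trichotomy m 1 with hm1 | hm1 | hm1
    · -- m < 1
      have hDval : D = 2 ^ (2 - m) / (1 - m) := by rw [hDdef, if_pos hm1]
      have hJ : (∫ x in (0 + 1 : ℝ)..(R + 1), x ^ (-m)) =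
          ((R + 1) ^ (-m + 1) - 1) / (-m + 1) := by
        rw [integral_rpow (Or.inl (by linarith))]
        norm_num
      have h1m : (0:ℝ) < -m + 1 := by linarith
      have hb1 : (R + 1) ^ (-m + 1) ≤ (2 * R) ^ (-m + 1) :=
        Real.rpow_le_rpow (by linarith) (by linarith) (by linarith)
      have hb2 : (2 * R) ^ (-m + 1) = 2 ^ (-m + 1) * R ^ (-m + 1) :=
        Real.mul_rpow (by norm_num) hR0.le
      have hb3 : R ^ (-m + 1) = R ^ (-m) * R := by
        rw [Real.rpow_add hR0, Real.rpow_one]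
      have hc2 : (0:ℝ) < (2:ℝ) ^ (-m + 1) := Real.rpow_pos_of_pos two_pos _
      have h22 : (2:ℝ) ^ (2 - m) = 2 * 2 ^ (-m + 1) := by
        rw [show (2 - m : ℝ) = 1 + (-m + 1) by ring, Real.rpow_add two_pos, Real.rpow_one]
      have hrm : (0:ℝ) < R ^ (-m) := Real.rpow_pos_of_pos hR0 _
      have hH : (∫ z in Set.Ioc (0:ℝ) R, 1 / ((z + A) ^ k * (z + 1) ^ m)) ≤
          2 ^ (2 - m) / (1 - m) * (R ^ (-m) * A ^ (1 - k)) := by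
        refine hHa.trans ?_
        rw [hJ, hY, h22]
        have hJb : ((R + 1) ^ (-m + 1) - 1) / (-m + 1) ≤
            2 ^ (-m + 1) * (R ^ (-m) * R) / (-m + 1) := by
          exact (div_le_div_iff_of_pos_right h1m).2 (by nlinarith [hb1, hb2, hb3])
        have := mul_le_mul_of_nonneg_left hJb hAnk
        refine this.trans ?_
        rw [show (1 - m : ℝ) = -m + 1 by ring]
        have key : (0:ℝ) ≤ (A ^ (-k) * R ^ (-m) * 2 ^ (-m + 1) * (-m + 1)⁻¹) * (2 * A - R) :=
          mul_nonneg (by positivity) (by linarith)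
        rw [div_eq_mul_inv, div_eq_mul_inv]
        nlinarith [key]
      rw [← hDval] at hH
      linarith [hH, hT, mul_nonneg (mul_nonneg (Real.rpow_nonneg (by norm_num : (0:ℝ) ≤ 2) m)
          (inv_pos.2 hk1).le) hP1, mul_nonneg hC.le ht2, mul_nonneg hC.le ht3]
    · -- m = 1
      subst hm1
      have hDval : D = 2 ^ (k + 1) := by rw [hDdef]; norm_num
      have hJ : (∫ x in (0 + 1 : ℝ)..(R + 1), x ^ (-(1:ℝ))) = Real.log (R + 1) := by
        simp only [Real.rpow_neg_one]
        rw [show ((0:ℝ) + 1) = 1 by norm_num, integral_inv (by simpa using h0)]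
        rw [div_one]
      have hlog2 : Real.log (R + 1) ≤ 2 * Real.log R := by
        have h1 : Real.log (R + 1) ≤ Real.log (R ^ (2:ℕ)) :=
          Real.log_le_log (by linarith) (by nlinarith)
        rwa [Real.log_pow, Nat.cast_ofNat] at h1
      have h2k1 : (2:ℝ) ^ (k + 1) = 2 ^ k * 2 := by
        rw [Real.rpow_add two_pos, Real.rpow_one]
      have hH : (∫ z in Set.Ioc (0:ℝ) R, 1 / ((z + A) ^ k * (z + 1) ^ (1:ℝ))) ≤
          2 ^ (k + 1) * (R ^ (-k) * Real.log R) := by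
        refine hHa.trans ?_
        rw [hJ, h2k1]
        nlinarith [mul_le_mul_of_nonneg_left hlog2 hAnk,
          mul_le_mul_of_nonneg_right hAk2 (by positivity : (0:ℝ) ≤ 2 * Real.log R)]
      rw [if_pos rfl, if_neg (lt_irrefl (1:ℝ))]
      rw [← hDval] at hH
      have hP2 : (0:ℝ) ≤ R ^ (-k) * Real.log R := mul_nonneg hP3 hlog
      linarith [hH, hT, mul_nonneg (inv_pos.2 hkm1).le hP2,
        mul_nonneg (mul_nonneg (Real.rpow_nonneg (by norm_num : (0:ℝ) ≤ 2) (1:ℝ))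
          (inv_pos.2 hk1).le) hP2,
        mul_nonneg hD.le hP1, mul_nonneg (inv_pos.2 hkm1).le hP1,
        mul_nonneg (mul_nonneg (Real.rpow_nonneg (by norm_num : (0:ℝ) ≤ 2) (1:ℝ))
          (inv_pos.2 hk1).le) hP1]
    · -- m > 1
      have hDval : D = 2 ^ k / (m - 1) := by
        rw [hDdef, if_neg (by linarith), if_neg (by linarith)]
      have hm1' : (0:ℝ) < m - 1 := by linarith
      have hJ : (∫ x in (0 + 1 : ℝ)..(R + 1), x ^ (-m)) =
          ((R + 1) ^ (-m + 1) - 1) / (-m + 1) := by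
        rw [integral_rpow (Or.inr ⟨by intro h; linarith [h], h0⟩)]
        norm_num
      have hJb : ((R + 1) ^ (-m + 1) - 1) / (-m + 1) ≤ (m - 1)⁻¹ := by
        have hX : (0:ℝ) ≤ (R + 1) ^ (-m + 1) := Real.rpow_nonneg (by linarith) _
        have e : ((R + 1) ^ (-m + 1) - 1) / (-m + 1) =
            (1 - (R + 1) ^ (-m + 1)) * (m - 1)⁻¹ := by
          have hne1 : (-m + 1 : ℝ) ≠ 0 := by intro h; linarith
          have hne2 : (m - 1 : ℝ) ≠ 0 := hm1'.ne'
          field_simp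
          ring
        rw [e]
        nlinarith [mul_nonneg hX (inv_pos.2 hm1').le, inv_pos.2 hm1']
      have hH : (∫ z in Set.Ioc (0:ℝ) R, 1 / ((z + A) ^ k * (z + 1) ^ m)) ≤
          2 ^ k / (m - 1) * R ^ (-k) := by
        refine hHa.trans ?_
        rw [hJ]
        have h1 := mul_le_mul_of_nonneg_left hJb hAnk
        refine h1.trans ?_
        rw [div_eq_mul_inv]
        nlinarith [mul_le_mul_of_nonneg_right hAk2 (inv_pos.2 hm1').le]
      rw [if_neg (by linarith : ¬ m = 1), if_pos hm1]
      rw [← hDval] at hH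
      linarith [hH, hT, mul_nonneg (inv_pos.2 hkm1).le hP3,
        mul_nonneg (mul_nonneg (Real.rpow_nonneg (by norm_num : (0:ℝ) ≤ 2) m)
          (inv_pos.2 hk1).le) hP3,
        mul_nonneg hD.le hP1, mul_nonneg (inv_pos.2 hkm1).le hP1,
        mul_nonneg (mul_nonneg (Real.rpow_nonneg (by norm_num : (0:ℝ) ≤ 2) m)
          (inv_pos.2 hk1).le) hP1]
end

section
/- Let k ≥ 0 be a real number and c > 0. Then there is a constant C depending only on k and c such that for all r > 0 and t > 0, t^{−k/2} e^{−r²/(c t)} log(2 + r) ≤ C (r + √t)^{−k} log(2 + t). -/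
open Real

/-- Lemma 3.3, lem-logxt: For `k ≥ 0` and `c > 0` there is `C = C(k,c)`
such that for all `r, t > 0`,
`t^(-k/2) e^(-r²/(ct)) log(2+r) ≤ C (r+√t)^(-k) log(2+t)`. -/
theorem log_heat_decay (k c : ℝ) (hk : 0 ≤ k) (hc : 0 < c) :
    ∃ C : ℝ, 0 < C ∧ ∀ r t : ℝ, 0 < r → 0 < t →
      t ^ (-k / 2) * Real.exp (-r ^ 2 / (c * t)) * Real.log (2 + r) ≤
        C * (r + Real.sqrt t) ^ (-k) * Real.log (2 + t) := by
  refine ⟨4 * Real.exp (c * (k + 1) ^ 2 / 4), by positivity, ?_⟩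
  intro r t hr ht
  set s := Real.sqrt t with hs
  have hs0 : 0 < s := Real.sqrt_pos.mpr ht
  have hts : t = s ^ 2 := (Real.sq_sqrt ht.le).symm
  set x := r / s with hx
  have hx0 : 0 < x := div_pos hr hs0
  have hrx : r = x * s := by rw [hx, div_mul_cancel₀ r hs0.ne']
  have h1 : t ^ (-k / 2) = s ^ (-k) := by
    rw [hs, Real.sqrt_eq_rpow, ← Real.rpow_mul ht.le]
    congr 1; ring
  have h1x : (0:ℝ) < 1 + x := by linarith
  have h2 : (r + s) ^ (-k) = s ^ (-k) * (1 + x) ^ (-k) := by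
    have hrs : r + s = s * (1 + x) := by rw [hrx]; ring
    rw [hrs, Real.mul_rpow hs0.le h1x.le]
  have h3 : -r ^ 2 / (c * t) = -x ^ 2 / c := by
    rw [hts, hrx]; field_simp
  have hlog2t : Real.log 2 ≤ Real.log (2 + t) :=
    Real.log_le_log (by norm_num) (by linarith)
  have hlog2 : (0.6931471803 : ℝ) < Real.log 2 := Real.log_two_gt_d9
  have hlogt0 : (0:ℝ) < Real.log (2 + t) := by linarith
  -- bound log(2+s) ≤ 2 log(2+t)
  have hlogs : Real.log (2 + s) ≤ 2 * Real.log (2 + t) := by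
    rcases le_or_gt 1 t with h | h
    · have hst : s ≤ t := by
        rw [hs]
        calc Real.sqrt t ≤ Real.sqrt (t^2) := by
              apply Real.sqrt_le_sqrt; nlinarith
          _ = t := Real.sqrt_sq ht.le
      have := Real.log_le_log (by linarith : (0:ℝ) < 2 + s) (by linarith : 2 + s ≤ 2 + t)
      linarith
    · have hst : s < 1 := by
        rw [hs]; rw [show (1:ℝ) = Real.sqrt 1 by simp]
        exact Real.sqrt_lt_sqrt ht.le h
      have h34 : Real.log (2 + s) ≤ Real.log 4 :=
        Real.log_le_log (by linarith) (by linarith)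
      have h4 : Real.log 4 = 2 * Real.log 2 := by
        rw [show (4:ℝ) = 2^2 by norm_num, Real.log_pow]; push_cast; ring
      linarith
  -- bound log(2+x) ≤ 1 + x
  have hlogx : Real.log (2 + x) ≤ 1 + x := by
    have := Real.log_le_sub_one_of_pos (by linarith : (0:ℝ) < 2 + x)
    linarith
  -- bound log(2+r)
  have hlogr : Real.log (2 + r) ≤ 2 * (2 + x) * Real.log (2 + t) := by
    have hprod : 2 + r ≤ (2 + x) * (2 + s) := by rw [hrx]; nlinarith
    have h5 : Real.log (2 + r) ≤ Real.log (2 + x) + Real.log (2 + s) := by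
      calc Real.log (2 + r) ≤ Real.log ((2 + x) * (2 + s)) :=
            Real.log_le_log (by linarith) hprod
        _ = Real.log (2 + x) + Real.log (2 + s) :=
            Real.log_mul (by linarith) (by linarith)
    have h6 : 1 + x ≤ 2 * (1 + x) * Real.log (2 + t) := by nlinarith
    linarith [hlogx, hlogs, h5, h6]
  -- exponent bounds
  have hexp1 : (1 + x) ^ k ≤ Real.exp (k * x) := by
    calc (1 + x) ^ k ≤ (Real.exp x) ^ k :=
          Real.rpow_le_rpow h1x.le (by linarith [Real.add_one_le_exp x]) hk
      _ = Real.exp (k * x) := by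
          rw [Real.rpow_def_of_pos (Real.exp_pos x), Real.log_exp]; ring_nf
  have hexp2 : 2 + x ≤ 2 * Real.exp x := by
    have h7 := Real.add_one_le_exp x
    have h8 : (1:ℝ) ≤ Real.exp x := by
      rw [show (1:ℝ) = Real.exp 0 by simp]; exact Real.exp_le_exp.mpr hx0.le
    linarith
  have hquad : k * x + x + -x ^ 2 / c ≤ c * (k + 1) ^ 2 / 4 := by
    have key2 : (k * x + x) * c - x ^ 2 ≤ c ^ 2 * (k + 1) ^ 2 / 4 := by
      nlinarith [sq_nonneg (x - c * (k + 1) / 2)]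
    have e1 : k * x + x + -x ^ 2 / c = ((k * x + x) * c - x ^ 2) / c := by
      field_simp; ring
    have e2 : c * (k + 1) ^ 2 / 4 = (c ^ 2 * (k + 1) ^ 2 / 4) / c := by
      field_simp
    rw [e1, e2]; gcongr
  -- key inequality
  have key : (1 + x) ^ k * (Real.exp (-x ^ 2 / c) * Real.log (2 + r)) ≤
      4 * Real.exp (c * (k + 1) ^ 2 / 4) * Real.log (2 + t) := by
    calc (1 + x) ^ k * (Real.exp (-x ^ 2 / c) * Real.log (2 + r))
        ≤ Real.exp (k * x) * (Real.exp (-x ^ 2 / c) * (2 * (2 + x) * Real.log (2 + t))) := by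
          have hlogr0 : 0 ≤ Real.log (2 + r) := Real.log_nonneg (by linarith)
          apply mul_le_mul hexp1
          · exact mul_le_mul_of_nonneg_left hlogr (Real.exp_pos _).le
          · exact mul_nonneg (Real.exp_pos _).le hlogr0
          · positivity
      _ ≤ Real.exp (k * x) * (Real.exp (-x ^ 2 / c) * (2 * (2 * Real.exp x) * Real.log (2 + t))) := by
          gcongr
      _ = 4 * Real.exp (k * x + x + -x ^ 2 / c) * Real.log (2 + t) := by
          rw [Real.exp_add, Real.exp_add]; ring
      _ ≤ 4 * Real.exp (c * (k + 1) ^ 2 / 4) * Real.log (2 + t) := by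
          gcongr
  -- assemble
  rw [h1, h2, h3]
  have hpowk : (0:ℝ) < (1 + x) ^ k := Real.rpow_pos_of_pos h1x k
  have hxneg : (1 + x) ^ (-k) = ((1 + x) ^ k)⁻¹ := Real.rpow_neg h1x.le k
  have hsk : (0:ℝ) < s ^ (-k) := Real.rpow_pos_of_pos hs0 _
  rw [hxneg]
  calc s ^ (-k) * Real.exp (-x ^ 2 / c) * Real.log (2 + r)
      = s ^ (-k) * ((1 + x) ^ k)⁻¹ *
        ((1 + x) ^ k * (Real.exp (-x ^ 2 / c) * Real.log (2 + r))) := by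
        field_simp
    _ ≤ s ^ (-k) * ((1 + x) ^ k)⁻¹ *
        (4 * Real.exp (c * (k + 1) ^ 2 / 4) * Real.log (2 + t)) := by
        apply mul_le_mul_of_nonneg_left key; positivity
    _ = 4 * Real.exp (c * (k + 1) ^ 2 / 4) * (s ^ (-k) * ((1 + x) ^ k)⁻¹) *
        Real.log (2 + t) := by ring
end

section
/- Let n ≥ 2 and 0 ≤ a ≤ n. Then there is a constant C depending only on n and a such that for all x ∈ ℝ^n_+ and t > 0, ∫_{ℝ^n_+} (|x−y| + √t)^{−(n+1)} ⟨y⟩^{−2a} dy ≤ C t^{−1/2} (|x| + √t + 1)^{−a}. -/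
open MeasureTheory Real Set
open scoped ENNReal

noncomputable section

/-- `ℝⁿ` as a Euclidean space. -/
abbrev Rn (n : ℕ) : Type := EuclideanSpace ℝ (Fin n)

/-- The index of the last coordinate. -/
def lastIdx (n : ℕ) (hn : 0 < n := by omega) : Fin n := ⟨n - 1, by omega⟩

/-- The open half space `ℝⁿ₊ = {x : xₙ > 0}`. -/
def halfSpace (n : ℕ) (hn : 0 < n := by omega) : Set (Rn n) :=
  {x : Rn n | 0 < x (lastIdx n)}

/-- The reflection `x* = (x', -xₙ)`. -/
def reflect (n : ℕ) (x : Rn n) (hn : 0 < n := by omega) : Rn n :=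
  WithLp.toLp 2 (fun i => if i = lastIdx n then -(x i) else x i)

/-- The heat kernel `Γ(x,t) = (4πt)^(-n/2) e^(-|x|²/(4t))` for `t > 0` (and `0` for `t ≤ 0`). -/
def heatKernel (n : ℕ) (x : Rn n) (t : ℝ) : ℝ :=
  if 0 < t then (4 * π * t) ^ (-(n : ℝ) / 2) * Real.exp (-‖x‖ ^ 2 / (4 * t)) else 0

/-- The Neumann Green function `G^N(x,y,t) = Γ(x−y,t) + Γ(x−y*,t)` of the heat equation
in the half space. -/
def GN (n : ℕ) (x y : Rn n) (t : ℝ) (hn : 0 < n := by omega) : ℝ :=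
  heatKernel n (x - y) t + heatKernel n (x - reflect n y) t

/-- The Dirichlet Green function `G^D(x,y,t) = Γ(x−y,t) − Γ(x−y*,t)` of the heat equation
in the half space. -/
def GD (n : ℕ) (x y : Rn n) (t : ℝ) (hn : 0 < n := by omega) : ℝ :=
  heatKernel n (x - y) t - heatKernel n (x - reflect n y) t

namespace KernelIntDecayAux

/-- The integral of `(1+|u|)^{-(n+1)}` over `ℝⁿ`. -/
def C1 (n : ℕ) : ℝ := ∫ u : Rn n, (1 + ‖u‖) ^ (-((n : ℝ) + 1))

/-- The integral of `(1+|u|²)^{-n}` over `ℝⁿ`. -/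
def C2 (n : ℕ) : ℝ := ∫ u : Rn n, (1 + ‖u‖ ^ 2) ^ (-(n : ℝ))

lemma finrank_Rn (n : ℕ) : Module.finrank ℝ (Rn n) = n := finrank_euclideanSpace_fin

lemma integrable_one_add (n : ℕ) :
    Integrable (fun u : Rn n ↦ (1 + ‖u‖) ^ (-((n : ℝ) + 1))) := by
  apply integrable_one_add_norm (μ := (volume : Measure (Rn n)))
  rw [finrank_Rn]
  exact lt_add_one _

lemma C1_nonneg (n : ℕ) : 0 ≤ C1 n :=
  integral_nonneg fun u ↦ Real.rpow_nonneg (by positivity) _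

lemma integrable_W (n : ℕ) (hn : 0 < n) :
    Integrable (fun u : Rn n ↦ (1 + ‖u‖ ^ 2) ^ (-(n : ℝ))) := by
  have hlt : ((Module.finrank ℝ (Rn n) : ℝ)) < 2 * (n : ℝ) := by
    rw [finrank_Rn]
    have h0 : (0:ℝ) < n := by exact_mod_cast hn
    linarith
  have h := integrable_rpow_neg_one_add_norm_sq (μ := (volume : Measure (Rn n)))
    (r := 2 * (n : ℝ)) hlt
  have he : ∀ u : Rn n, ((1 : ℝ) + ‖u‖ ^ 2) ^ (-(2 * (n : ℝ)) / 2)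
      = (1 + ‖u‖ ^ 2) ^ (-(n : ℝ)) := by
    intro u; rw [show -(2 * (n : ℝ)) / 2 = -(n : ℝ) by ring]
  simp only [he] at h
  exact h

lemma C2_nonneg (n : ℕ) : 0 ≤ C2 n :=
  integral_nonneg fun u ↦ Real.rpow_nonneg (by positivity) _

lemma integrable_K (n : ℕ) {s : ℝ} (hs : 0 < s) :
    Integrable (fun z : Rn n ↦ (‖z‖ + s) ^ (-((n : ℝ) + 1))) := by
  set m : ℝ := min s 1 with hm
  have hm0 : 0 < m := lt_min hs one_pos
  refine ((integrable_one_add n).const_mul (m ^ (-((n : ℝ) + 1)))).mono'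
    ?_ (Filter.Eventually.of_forall fun z ↦ ?_)
  · refine (Continuous.rpow_const ?_ fun z ↦ Or.inl ?_).aestronglyMeasurable
    · exact continuous_norm.add continuous_const
    · positivity
  · rw [Real.norm_of_nonneg (Real.rpow_nonneg (by positivity) _)]
    have h1 : m * (1 + ‖z‖) ≤ ‖z‖ + s := by
      have h2 : m ≤ s := min_le_left s 1
      have h3 : m ≤ 1 := min_le_right s 1
      nlinarith [norm_nonneg z]
    calc (‖z‖ + s) ^ (-((n : ℝ) + 1))
        ≤ (m * (1 + ‖z‖)) ^ (-((n : ℝ) + 1)) := by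
          apply Real.rpow_le_rpow_of_nonpos (by positivity) h1
          have := n.cast_nonneg (α := ℝ); linarith
      _ = m ^ (-((n : ℝ) + 1)) * (1 + ‖z‖) ^ (-((n : ℝ) + 1)) :=
          Real.mul_rpow hm0.le (by positivity)

lemma integral_K (n : ℕ) {s : ℝ} (hs : 0 < s) :
    ∫ z : Rn n, (‖z‖ + s) ^ (-((n : ℝ) + 1)) = C1 n * s⁻¹ := by
  have h := MeasureTheory.Measure.integral_comp_smul_of_nonneg (volume : Measure (Rn n))
    (fun z : Rn n ↦ (‖z‖ + s) ^ (-((n : ℝ) + 1))) s (hR := hs.le)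
  have h1 : ∀ u : Rn n, (‖s • u‖ + s) ^ (-((n : ℝ) + 1))
      = s ^ (-((n : ℝ) + 1)) * (1 + ‖u‖) ^ (-((n : ℝ) + 1)) := by
    intro u
    rw [norm_smul, Real.norm_eq_abs, abs_of_pos hs, show s * ‖u‖ + s = s * (1 + ‖u‖) by ring,
      Real.mul_rpow hs.le (by positivity)]
  simp only [h1] at h
  rw [integral_const_mul, finrank_Rn, smul_eq_mul] at h
  have hC : ∫ (a : Rn n), (1 + ‖a‖) ^ (-((n : ℝ) + 1)) = C1 n := rfl
  rw [hC] at h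
  have hsn : (s : ℝ) ^ n ≠ 0 := by positivity
  have hpow : (s : ℝ) ^ n * s ^ (-((n : ℝ) + 1)) = s⁻¹ := by
    rw [← Real.rpow_natCast s n, ← Real.rpow_add hs,
      show (n : ℝ) + -((n : ℝ) + 1) = -1 by ring, Real.rpow_neg_one]
  calc ∫ z : Rn n, (‖z‖ + s) ^ (-((n : ℝ) + 1))
      = s ^ n * (s ^ (-((n : ℝ) + 1)) * C1 n) := by
        rw [h, ← mul_assoc, mul_inv_cancel₀ hsn, one_mul]
    _ = (s ^ n * s ^ (-((n : ℝ) + 1))) * C1 n := by ring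
    _ = s⁻¹ * C1 n := by rw [hpow]
    _ = C1 n * s⁻¹ := mul_comm _ _

lemma K_translate (n : ℕ) (x : Rn n) {s : ℝ} (hs : 0 < s) :
    Integrable (fun y : Rn n ↦ (‖x - y‖ + s) ^ (-((n : ℝ) + 1))) ∧
      ∫ y : Rn n, (‖x - y‖ + s) ^ (-((n : ℝ) + 1)) = C1 n * s⁻¹ := by
  constructor
  · exact (integrable_K n hs).comp_sub_left x
  · rw [integral_sub_left_eq_self (fun z : Rn n ↦ (‖z‖ + s) ^ (-((n : ℝ) + 1))) volume x]
    exact integral_K n hs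

lemma W_le_one {y : Rn n} {b : ℝ} (hb : 0 ≤ b) : (1 + ‖y‖ ^ 2 : ℝ) ^ (-b) ≤ 1 :=
  Real.rpow_le_one_of_one_le_of_nonpos (by nlinarith [sq_nonneg ‖y‖]) (neg_nonpos.2 hb)

lemma integrable_KW (n : ℕ) (x : Rn n) {s : ℝ} (hs : 0 < s) {b : ℝ} (hb : 0 ≤ b) :
    Integrable (fun y : Rn n ↦
      (‖x - y‖ + s) ^ (-((n : ℝ) + 1)) * (1 + ‖y‖ ^ 2) ^ (-b)) := by
  refine (K_translate n x hs).1.mono' ?_ (Filter.Eventually.of_forall fun y ↦ ?_)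
  · apply Continuous.aestronglyMeasurable
    apply Continuous.mul
    · refine Continuous.rpow_const ?_ fun y ↦ Or.inl (by positivity)
      exact ((continuous_const.sub continuous_id).norm).add continuous_const
    · refine Continuous.rpow_const ?_ fun y ↦ Or.inl (by positivity)
      exact continuous_const.add ((continuous_norm).pow 2)
  · have h1 : (0:ℝ) ≤ (‖x - y‖ + s) ^ (-((n : ℝ) + 1)) := Real.rpow_nonneg (by positivity) _
    have h2 : (0:ℝ) ≤ (1 + ‖y‖ ^ 2 : ℝ) ^ (-b) := Real.rpow_nonneg (by positivity) _
    rw [Real.norm_of_nonneg (by positivity)]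
    calc (‖x - y‖ + s) ^ (-((n : ℝ) + 1)) * (1 + ‖y‖ ^ 2) ^ (-b)
        ≤ (‖x - y‖ + s) ^ (-((n : ℝ) + 1)) * 1 := by
          exact mul_le_mul_of_nonneg_left (W_le_one hb) h1
      _ = (‖x - y‖ + s) ^ (-((n : ℝ) + 1)) := mul_one _

/-- The key endpoint estimate (`a = n`). -/
lemma key_endpoint (n : ℕ) (hn : 0 < n) (x : Rn n) {s : ℝ} (hs : 0 < s) :
    ∫ y : Rn n, (‖x - y‖ + s) ^ (-((n : ℝ) + 1)) * (1 + ‖y‖ ^ 2) ^ (-(n : ℝ)) ≤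
      ((8 : ℝ) ^ n * C1 n + 2 ^ n * C2 n) * s⁻¹ * (‖x‖ + s + 1) ^ (-(n : ℝ)) := by
  set X : ℝ := ‖x‖ + s + 1 with hXdef
  have hX1 : 1 ≤ X := by
    have := norm_nonneg x
    simp only [hXdef]; linarith
  have hXpos : (0:ℝ) < X := lt_of_lt_of_le one_pos hX1
  have hnn : -(n:ℝ) ≤ 0 := neg_nonpos.2 (Nat.cast_nonneg n)
  have hpt : ∀ y : Rn n,
      (‖x - y‖ + s) ^ (-((n : ℝ) + 1)) * (1 + ‖y‖ ^ 2) ^ (-(n : ℝ)) ≤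
      ((8:ℝ) ^ n * X ^ (-(n:ℝ))) * (‖x - y‖ + s) ^ (-((n : ℝ) + 1)) +
      ((2:ℝ) ^ n * X ^ (-(n:ℝ)) * s⁻¹) * (1 + ‖y‖ ^ 2) ^ (-(n : ℝ)) := by
    intro y
    have hb : (0:ℝ) < ‖x - y‖ + s := by positivity
    have hw : (0:ℝ) < 1 + ‖y‖ ^ 2 := by positivity
    have hK0 : (0:ℝ) ≤ (‖x - y‖ + s) ^ (-((n : ℝ) + 1)) := Real.rpow_nonneg hb.le _
    have hW0 : (0:ℝ) ≤ (1 + ‖y‖ ^ 2 : ℝ) ^ (-(n : ℝ)) := Real.rpow_nonneg hw.le _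
    have hXn0 : (0:ℝ) ≤ X ^ (-(n:ℝ)) := Real.rpow_nonneg hXpos.le _
    have hcover : X ≤ (1 + ‖y‖) + (‖x - y‖ + s) := by
      have h := norm_add_le (x - y) y
      simp only [sub_add_cancel] at h
      simp only [hXdef]; linarith
    rcases le_or_gt (X / 2) (1 + ‖y‖) with hA | hB
    · -- y is large: the weight gives the decay in `X`
      have hA2 : X ≤ 2 * (1 + ‖y‖) := by linarith
      have h1 : X ^ 2 / 8 ≤ 1 + ‖y‖ ^ 2 := by
        nlinarith [sq_nonneg (1 - ‖y‖), norm_nonneg y, hXpos.le,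
          mul_le_mul hA2 hA2 hXpos.le (by positivity : (0:ℝ) ≤ 2 * (1 + ‖y‖))]
      have h2 : ((1:ℝ) + ‖y‖ ^ 2) ^ (-(n:ℝ)) ≤ (X ^ 2 / 8) ^ (-(n:ℝ)) :=
        Real.rpow_le_rpow_of_nonpos (by positivity) h1 hnn
      have h3 : (X ^ 2 / 8 : ℝ) ^ (-(n:ℝ)) = (8:ℝ) ^ n * (X ^ 2) ^ (-(n:ℝ)) := by
        rw [Real.div_rpow (by positivity) (by norm_num : (0:ℝ) ≤ 8),
          Real.rpow_neg (by norm_num : (0:ℝ) ≤ 8) (n:ℝ), div_eq_mul_inv, inv_inv,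
          Real.rpow_natCast, mul_comm]
      have h4 : ((X:ℝ) ^ 2) ^ (-(n:ℝ)) ≤ X ^ (-(n:ℝ)) :=
        Real.rpow_le_rpow_of_nonpos hXpos (by nlinarith) hnn
      have h5 : ((1:ℝ) + ‖y‖ ^ 2) ^ (-(n:ℝ)) ≤ (8:ℝ) ^ n * X ^ (-(n:ℝ)) := by
        have h8n : (0:ℝ) ≤ (8:ℝ) ^ n := by positivity
        calc ((1:ℝ) + ‖y‖ ^ 2) ^ (-(n:ℝ)) ≤ (8:ℝ) ^ n * (X ^ 2) ^ (-(n:ℝ)) := h3 ▸ h2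
          _ ≤ (8:ℝ) ^ n * X ^ (-(n:ℝ)) := mul_le_mul_of_nonneg_left h4 h8n
      calc (‖x - y‖ + s) ^ (-((n : ℝ) + 1)) * (1 + ‖y‖ ^ 2) ^ (-(n : ℝ))
          ≤ (‖x - y‖ + s) ^ (-((n : ℝ) + 1)) * ((8:ℝ) ^ n * X ^ (-(n:ℝ))) :=
            mul_le_mul_of_nonneg_left h5 hK0
        _ = ((8:ℝ) ^ n * X ^ (-(n:ℝ))) * (‖x - y‖ + s) ^ (-((n : ℝ) + 1)) := mul_comm _ _
        _ ≤ _ := le_add_of_nonneg_right (by positivity)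
    · -- x - y is large: the kernel gives the decay in `X`
      have hB' : X / 2 ≤ ‖x - y‖ + s := by linarith
      have hsplit : (‖x - y‖ + s) ^ (-((n : ℝ) + 1))
          = (‖x - y‖ + s) ^ (-(n:ℝ)) * (‖x - y‖ + s)⁻¹ := by
        rw [show -((n:ℝ)+1) = -(n:ℝ) + (-1) by ring, Real.rpow_add hb, Real.rpow_neg_one]
      have h5 : (‖x - y‖ + s) ^ (-(n:ℝ)) ≤ (X/2) ^ (-(n:ℝ)) :=
        Real.rpow_le_rpow_of_nonpos (by positivity) hB' hnn
      have h6 : ((X:ℝ)/2) ^ (-(n:ℝ)) = (2:ℝ) ^ n * X ^ (-(n:ℝ)) := by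
        rw [Real.div_rpow hXpos.le (by norm_num : (0:ℝ) ≤ 2),
          Real.rpow_neg (by norm_num : (0:ℝ) ≤ 2) (n:ℝ), div_eq_mul_inv, inv_inv,
          Real.rpow_natCast, mul_comm]
      have h7 : (‖x - y‖ + s)⁻¹ ≤ s⁻¹ := by
        apply inv_anti₀ hs
        linarith [norm_nonneg (x - y)]
      have h8 : (‖x - y‖ + s) ^ (-((n : ℝ) + 1)) ≤ (2:ℝ) ^ n * X ^ (-(n:ℝ)) * s⁻¹ := by
        calc (‖x - y‖ + s) ^ (-((n : ℝ) + 1))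
            = (‖x - y‖ + s) ^ (-(n:ℝ)) * (‖x - y‖ + s)⁻¹ := hsplit
          _ ≤ (X/2) ^ (-(n:ℝ)) * s⁻¹ :=
              mul_le_mul h5 h7 (inv_nonneg.2 hb.le) (Real.rpow_nonneg (by positivity) _)
          _ = (2:ℝ) ^ n * X ^ (-(n:ℝ)) * s⁻¹ := by rw [h6]
      calc (‖x - y‖ + s) ^ (-((n : ℝ) + 1)) * (1 + ‖y‖ ^ 2) ^ (-(n : ℝ))
          ≤ ((2:ℝ) ^ n * X ^ (-(n:ℝ)) * s⁻¹) * (1 + ‖y‖ ^ 2) ^ (-(n : ℝ)) :=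
            mul_le_mul_of_nonneg_right h8 hW0
        _ ≤ _ := le_add_of_nonneg_left (by positivity)
  have hKint := (K_translate n x hs).1
  have hKeq := (K_translate n x hs).2
  have hWint := integrable_W n hn
  have hKW := integrable_KW n x hs (b := (n:ℝ)) (Nat.cast_nonneg n)
  have hmono := integral_mono hKW
    ((hKint.const_mul _).add (hWint.const_mul _)) hpt
  simp only [Pi.add_apply] at hmono
  rw [integral_add (hKint.const_mul _) (hWint.const_mul _), integral_const_mul,
    integral_const_mul, hKeq] at hmono
  have hC2 : ∫ (y : Rn n), ((1:ℝ) + ‖y‖ ^ 2) ^ (-(n:ℝ)) = C2 n := rfl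
  rw [hC2] at hmono
  calc ∫ y : Rn n, (‖x - y‖ + s) ^ (-((n : ℝ) + 1)) * (1 + ‖y‖ ^ 2) ^ (-(n : ℝ))
      ≤ (8:ℝ) ^ n * X ^ (-(n:ℝ)) * (C1 n * s⁻¹)
        + (2:ℝ) ^ n * X ^ (-(n:ℝ)) * s⁻¹ * C2 n := hmono
    _ = ((8 : ℝ) ^ n * C1 n + 2 ^ n * C2 n) * s⁻¹ * X ^ (-(n : ℝ)) := by ring

/-- Hölder interpolation between the trivial case `a = 0` and the endpoint `a = n`. -/
lemma holder_est (n : ℕ) (hn : 0 < n) {a : ℝ} (ha : 0 < a) (han : a < n) (x : Rn n)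
    {s : ℝ} (hs : 0 < s) :
    ∫ y : Rn n, (‖x - y‖ + s) ^ (-((n : ℝ) + 1)) * (1 + ‖y‖ ^ 2) ^ (-a) ≤
      (C1 n) ^ (1 - a / (n:ℝ)) * ((8 : ℝ) ^ n * C1 n + 2 ^ n * C2 n) ^ (a / (n:ℝ)) * s⁻¹ *
        (‖x‖ + s + 1) ^ (-a) := by
  have hn0 : (0:ℝ) < n := by exact_mod_cast hn
  have hna : (0:ℝ) < (n:ℝ) - a := by linarith
  set p : ℝ := (n:ℝ) / ((n:ℝ) - a) with hp
  set q : ℝ := (n:ℝ) / a with hq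
  have hp0 : 0 < p := div_pos hn0 hna
  have hq0 : 0 < q := div_pos hn0 ha
  have hp1 : 1 < p := by
    rw [hp, lt_div_iff₀ hna]; linarith
  have hsum : p⁻¹ + q⁻¹ = 1 := by
    rw [hp, hq, inv_div, inv_div, ← add_div, sub_add_cancel, div_self hn0.ne']
  have hpq : p.HolderConjugate q := Real.holderConjugate_iff.mpr ⟨hp1, hsum⟩
  have hinvp : p⁻¹ = 1 - a / (n:ℝ) := by
    rw [hp, inv_div, sub_div, div_self hn0.ne']
  have hinvq : q⁻¹ = a / (n:ℝ) := by rw [hq, inv_div]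
  -- the two factors
  set f : Rn n → ℝ := fun y ↦ ((‖x - y‖ + s) ^ (-((n : ℝ) + 1))) ^ (1/p) with hf
  set g : Rn n → ℝ := fun y ↦ ((‖x - y‖ + s) ^ (-((n : ℝ) + 1))) ^ (1/q)
    * (1 + ‖y‖ ^ 2) ^ (-a) with hg
  have hbpos : ∀ y : Rn n, (0:ℝ) < ‖x - y‖ + s := fun y ↦ by positivity
  have hKpos : ∀ y : Rn n, (0:ℝ) < (‖x - y‖ + s) ^ (-((n : ℝ) + 1)) :=
    fun y ↦ Real.rpow_pos_of_pos (hbpos y) _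
  have hwpos : ∀ y : Rn n, (0:ℝ) < (1 + ‖y‖ ^ 2 : ℝ) := fun y ↦ by positivity
  have hfg : ∀ y, f y * g y
      = (‖x - y‖ + s) ^ (-((n : ℝ) + 1)) * (1 + ‖y‖ ^ 2) ^ (-a) := by
    intro y
    simp only [hf, hg]
    rw [← mul_assoc, ← Real.rpow_add (hKpos y),
      show 1/p + 1/q = 1 by rw [one_div, one_div, hsum], Real.rpow_one]
  have hfp : ∀ y, f y ^ p = (‖x - y‖ + s) ^ (-((n : ℝ) + 1)) := by
    intro y
    simp only [hf]
    rw [← Real.rpow_mul (hKpos y).le, one_div_mul_cancel hp0.ne', Real.rpow_one]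
  have hgq : ∀ y, g y ^ q
      = (‖x - y‖ + s) ^ (-((n : ℝ) + 1)) * (1 + ‖y‖ ^ 2) ^ (-(n:ℝ)) := by
    intro y
    simp only [hg]
    rw [Real.mul_rpow (Real.rpow_nonneg (hKpos y).le _) (Real.rpow_nonneg (hwpos y).le _),
      ← Real.rpow_mul (hKpos y).le, one_div_mul_cancel hq0.ne', Real.rpow_one,
      ← Real.rpow_mul (hwpos y).le,
      show -a * q = -(n:ℝ) by rw [hq]; field_simp]
  -- measurability
  have hKcont : Continuous (fun y : Rn n ↦ (‖x - y‖ + s) ^ (-((n : ℝ) + 1))) := by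
    refine Continuous.rpow_const ?_ fun y ↦ Or.inl (by positivity)
    exact ((continuous_const.sub continuous_id).norm).add continuous_const
  have hfm : AEStronglyMeasurable f (volume : Measure (Rn n)) := by
    refine (Continuous.rpow_const hKcont fun y ↦ Or.inl (hKpos y).ne').aestronglyMeasurable
  have hgm : AEStronglyMeasurable g (volume : Measure (Rn n)) := by
    apply Continuous.aestronglyMeasurable
    refine (Continuous.rpow_const hKcont fun y ↦ Or.inl (hKpos y).ne').mul ?_
    refine Continuous.rpow_const ?_ fun y ↦ Or.inl (hwpos y).ne'
    exact continuous_const.add ((continuous_norm).pow 2)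
  -- memℒp
  have hKint := (K_translate n x hs).1
  have hKeq := (K_translate n x hs).2
  have hKWn := integrable_KW n x hs (b := (n:ℝ)) (Nat.cast_nonneg n)
  have hfmem : MemLp f (ENNReal.ofReal p) volume := by
    have hne0 : ENNReal.ofReal p ≠ 0 := by
      simp only [ne_eq, ENNReal.ofReal_eq_zero, not_le]; exact hp0
    have hiff := memLp_norm_rpow_iff (p := ENNReal.ofReal p) (q := ENNReal.ofReal p)
      hfm hne0 ENNReal.ofReal_ne_top
    rw [ENNReal.div_self hne0 ENNReal.ofReal_ne_top] at hiff
    apply hiff.1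
    have heq : (fun y : Rn n ↦ ‖f y‖ ^ (ENNReal.ofReal p).toReal)
        = fun y : Rn n ↦ (‖x - y‖ + s) ^ (-((n : ℝ) + 1)) := by
      funext y
      rw [ENNReal.toReal_ofReal hp0.le, Real.norm_of_nonneg (le_of_lt ?_), hfp y]
      exact Real.rpow_pos_of_pos (hKpos y) _
    rw [heq]
    exact (memLp_one_iff_integrable).mpr hKint
  have hgmem : MemLp g (ENNReal.ofReal q) volume := by
    have hne0 : ENNReal.ofReal q ≠ 0 := by
      simp only [ne_eq, ENNReal.ofReal_eq_zero, not_le]; exact hq0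
    have hiff := memLp_norm_rpow_iff (p := ENNReal.ofReal q) (q := ENNReal.ofReal q)
      hgm hne0 ENNReal.ofReal_ne_top
    rw [ENNReal.div_self hne0 ENNReal.ofReal_ne_top] at hiff
    apply hiff.1
    have heq : (fun y : Rn n ↦ ‖g y‖ ^ (ENNReal.ofReal q).toReal)
        = fun y : Rn n ↦ (‖x - y‖ + s) ^ (-((n : ℝ) + 1)) * (1 + ‖y‖ ^ 2) ^ (-(n:ℝ)) := by
      funext y
      rw [ENNReal.toReal_ofReal hq0.le, Real.norm_of_nonneg (le_of_lt ?_), hgq y]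
      exact mul_pos (Real.rpow_pos_of_pos (hKpos y) _) (Real.rpow_pos_of_pos (hwpos y) _)
    rw [heq]
    exact (memLp_one_iff_integrable).mpr hKWn
  -- Hölder
  have hH := integral_mul_le_Lp_mul_Lq_of_nonneg hpq (f := f) (g := g)
    (Filter.Eventually.of_forall fun y ↦ (Real.rpow_pos_of_pos (hKpos y) _).le)
    (Filter.Eventually.of_forall fun y ↦
      (mul_pos (Real.rpow_pos_of_pos (hKpos y) _) (Real.rpow_pos_of_pos (hwpos y) _)).le)
    hfmem hgmem
  simp only [hfg, hfp, hgq] at hH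
  rw [hKeq] at hH
  -- bound the second factor using the endpoint estimate
  set X : ℝ := ‖x‖ + s + 1 with hXdef
  have hXpos : (0:ℝ) < X := by have := norm_nonneg x; simp only [hXdef]; positivity
  have hC3nn : (0:ℝ) ≤ (8 : ℝ) ^ n * C1 n + 2 ^ n * C2 n := by
    have := C1_nonneg n; have := C2_nonneg n; positivity
  have hIKWn_nonneg : (0:ℝ) ≤ ∫ y : Rn n,
      (‖x - y‖ + s) ^ (-((n : ℝ) + 1)) * (1 + ‖y‖ ^ 2) ^ (-(n:ℝ)) :=
    integral_nonneg fun y ↦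
      (mul_pos (Real.rpow_pos_of_pos (hbpos y) _) (Real.rpow_pos_of_pos (hwpos y) _)).le
  have hend := key_endpoint n hn x hs
  have hfac2 : (∫ y : Rn n,
        (‖x - y‖ + s) ^ (-((n : ℝ) + 1)) * (1 + ‖y‖ ^ 2) ^ (-(n:ℝ))) ^ (1/q)
      ≤ (((8 : ℝ) ^ n * C1 n + 2 ^ n * C2 n) * s⁻¹ * X ^ (-(n:ℝ))) ^ (1/q) :=
    Real.rpow_le_rpow hIKWn_nonneg hend (by positivity)
  have hfac1nn : (0:ℝ) ≤ (C1 n * s⁻¹) ^ (1/p) := Real.rpow_nonneg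
    (mul_nonneg (C1_nonneg n) (inv_nonneg.2 hs.le)) _
  have hchain : ∫ y : Rn n, (‖x - y‖ + s) ^ (-((n : ℝ) + 1)) * (1 + ‖y‖ ^ 2) ^ (-a)
      ≤ (C1 n * s⁻¹) ^ (1/p)
        * (((8 : ℝ) ^ n * C1 n + 2 ^ n * C2 n) * s⁻¹ * X ^ (-(n:ℝ))) ^ (1/q) :=
    le_trans hH (mul_le_mul_of_nonneg_left hfac2 hfac1nn)
  -- algebraic simplification of the right-hand side
  have halg : (C1 n * s⁻¹) ^ (1/p)
        * (((8 : ℝ) ^ n * C1 n + 2 ^ n * C2 n) * s⁻¹ * X ^ (-(n:ℝ))) ^ (1/q)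
      = (C1 n) ^ (1 - a / (n:ℝ)) * ((8 : ℝ) ^ n * C1 n + 2 ^ n * C2 n) ^ (a / (n:ℝ)) * s⁻¹ *
        X ^ (-a) := by
    rw [Real.mul_rpow (C1_nonneg n) (inv_nonneg.2 hs.le),
      Real.mul_rpow (mul_nonneg hC3nn (inv_nonneg.2 hs.le)) (Real.rpow_nonneg hXpos.le _),
      Real.mul_rpow hC3nn (inv_nonneg.2 hs.le),
      ← Real.rpow_mul hXpos.le,
      show -(n:ℝ) * (1/q) = -a by rw [hq]; field_simp,
      show (1:ℝ)/p = 1 - a / (n:ℝ) by rw [one_div, hinvp],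
      show (1:ℝ)/q = a / (n:ℝ) by rw [one_div, hinvq]]
    have hsinv : (s⁻¹) ^ (1 - a / (n:ℝ)) * (s⁻¹) ^ (a / (n:ℝ)) = s⁻¹ := by
      rw [← Real.rpow_add (inv_pos.2 hs)]
      norm_num
    calc C1 n ^ (1 - a / (n:ℝ)) * s⁻¹ ^ (1 - a / (n:ℝ))
          * (((8:ℝ) ^ n * C1 n + 2 ^ n * C2 n) ^ (a / (n:ℝ)) * s⁻¹ ^ (a / (n:ℝ)) * X ^ (-a))
        = C1 n ^ (1 - a / (n:ℝ)) * ((8:ℝ) ^ n * C1 n + 2 ^ n * C2 n) ^ (a / (n:ℝ))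
          * (s⁻¹ ^ (1 - a / (n:ℝ)) * s⁻¹ ^ (a / (n:ℝ))) * X ^ (-a) := by ring
      _ = _ := by rw [hsinv]
  rw [halg] at hchain
  exact hchain

end KernelIntDecayAux

/-- key integral estimate in the proof of Lemma 3.6: Let `n ≥ 2` and
`0 ≤ a ≤ n`. There is `C = C(n,a)` such that for all `x ∈ ℝⁿ₊` and `t > 0`,
`∫_{ℝⁿ₊} (|x−y|+√t)^(−(n+1)) ⟨y⟩^(−2a) dy ≤ C t^(−1/2) (|x|+√t+1)^(−a)`,
where `⟨y⟩^(−2a) = (1+|y|²)^(−a)`. -/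
theorem kernel_int_decay (n : ℕ) (hn : 2 ≤ n) (a : ℝ) (ha : 0 ≤ a) (han : a ≤ n) :
    ∃ C : ℝ, 0 < C ∧ ∀ x ∈ halfSpace n, ∀ t : ℝ, 0 < t →
      (∫ y in halfSpace n,
          (‖x - y‖ + Real.sqrt t) ^ (-((n : ℝ) + 1)) * (1 + ‖y‖ ^ 2) ^ (-a)) ≤
        C * t ^ (-(1 : ℝ) / 2) * (‖x‖ + Real.sqrt t + 1) ^ (-a) := by
  open KernelIntDecayAux in
  have hn0 : 0 < n := by omega
  obtain ⟨B, hB0, hB⟩ : ∃ B : ℝ, 0 ≤ B ∧ ∀ x : Rn n, ∀ s : ℝ, 0 < s →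
      (∫ y : Rn n, (‖x - y‖ + s) ^ (-((n:ℝ)+1)) * (1 + ‖y‖^2) ^ (-a))
        ≤ B * s⁻¹ * (‖x‖ + s + 1) ^ (-a) := by
    rcases eq_or_lt_of_le ha with ha0 | ha0
    · -- a = 0
      refine ⟨C1 n, C1_nonneg n, fun x s hs ↦ ?_⟩
      simp only [← ha0, neg_zero, Real.rpow_zero, mul_one]
      rw [(K_translate n x hs).2]
    rcases eq_or_lt_of_le han with han' | han'
    · -- a = n
      refine ⟨(8 : ℝ) ^ n * C1 n + 2 ^ n * C2 n, ?_, fun x s hs ↦ ?_⟩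
      · have := C1_nonneg n; have := C2_nonneg n; positivity
      · rw [han']
        exact key_endpoint n hn0 x hs
    · -- 0 < a < n : Hölder interpolation
      refine ⟨(C1 n) ^ (1 - a / (n:ℝ)) * ((8 : ℝ) ^ n * C1 n + 2 ^ n * C2 n) ^ (a / (n:ℝ)),
        ?_, fun x s hs ↦ ?_⟩
      · have h1 := C1_nonneg n; have h2 := C2_nonneg n; positivity
      · exact holder_est n hn0 ha0 han' x hs
  refine ⟨B + 1, by linarith, fun x _ t ht ↦ ?_⟩
  have hs : 0 < Real.sqrt t := Real.sqrt_pos.2 ht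
  have hT : t ^ (-(1:ℝ)/2) = (Real.sqrt t)⁻¹ := by
    rw [show (-(1:ℝ)/2) = -(1/2 : ℝ) by ring, Real.rpow_neg ht.le, ← Real.sqrt_eq_rpow]
  have hint := integrable_KW n x hs ha
  have hmono := setIntegral_le_integral (s := halfSpace n) hint
    (Filter.Eventually.of_forall fun y ↦ by positivity)
  have hfull := hB x (Real.sqrt t) hs
  have hXnn : (0:ℝ) ≤ (‖x‖ + Real.sqrt t + 1) ^ (-a) :=
    Real.rpow_nonneg (by positivity) _
  calc (∫ y in halfSpace n,
          (‖x - y‖ + Real.sqrt t) ^ (-((n : ℝ) + 1)) * (1 + ‖y‖ ^ 2) ^ (-a))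
      ≤ ∫ y : Rn n, (‖x - y‖ + Real.sqrt t) ^ (-((n : ℝ) + 1)) * (1 + ‖y‖ ^ 2) ^ (-a) := hmono
    _ ≤ B * (Real.sqrt t)⁻¹ * (‖x‖ + Real.sqrt t + 1) ^ (-a) := hfull
    _ ≤ (B + 1) * (Real.sqrt t)⁻¹ * (‖x‖ + Real.sqrt t + 1) ^ (-a) := by
        have h1 : (0:ℝ) ≤ (Real.sqrt t)⁻¹ := inv_nonneg.2 hs.le
        have h2 : B * (Real.sqrt t)⁻¹ ≤ (B + 1) * (Real.sqrt t)⁻¹ :=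
          mul_le_mul_of_nonneg_right (by linarith) h1
        exact mul_le_mul_of_nonneg_right h2 hXnn
    _ = (B + 1) * t ^ (-(1:ℝ)/2) * (‖x‖ + Real.sqrt t + 1) ^ (-a) := by rw [hT]

end
end
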